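/- arXiv:math/0411357 — 7 statements merged into one kernel-verified Lean document; each statement's English description precedes it below -/
import Mathlib

section
/- For every positive integer k, t_k := (q^{k/2} − q^{−k/2})^2 is a polynomial with integer coefficients in t := (q^{1/2} − q^{−1/2})^2; explicitly, t_k = Σ_{j=1}^{k} (k/j)·C(j+k−1, 2j−1)·t^j. -/
def dd (k j : ℕ) : ℕ := (k+j).choose (2*j) + (k+j-1).choose (2*j)

lemma choose_sec (n m : ℕ) : (n+2).choose (m+2) + n.choose (m+2) = 2 * (n+1).choose (m+2) + n.choose m := by
  rw [show n+2 = n+1+1 from rfl, Nat.choose_succ_succ, Nat.choose_succ_succ, Nat.choose_succ_succ]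
  simp only [Nat.succ_eq_add_one, show m+1+1 = m+2 from rfl]
  omega

lemma dd_rec (k j : ℕ) : dd (k+2) (j+1) + dd k (j+1) = dd (k+1) j + 2 * dd (k+1) (j+1) := by
  simp only [dd]
  have h1 := choose_sec (k+j+1) (2*j)
  have h2 := choose_sec (k+j) (2*j)
  simp only [show k+2+(j+1)-1 = k+j+2 from by omega, show k+(j+1)-1 = k+j from by omega,
    show k+1+j-1 = k+j from by omega, show k+1+(j+1)-1 = k+j+1 from by omega]
  ring_nf
  ring_nf at h1 h2
  omega

lemma dd_eq_zero {k j : ℕ} (h : k < j) : dd k j = 0 := by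
  simp only [dd]
  have h1 : (k+j).choose (2*j) = 0 := Nat.choose_eq_zero_of_lt (by omega)
  have h2 : (k+j-1).choose (2*j) = 0 := Nat.choose_eq_zero_of_lt (by omega)
  omega

lemma dd_mul (k i : ℕ) (hjk : i+1 ≤ k) :
    (i+1) * dd k (i+1) = k * (i + 1 + k - 1).choose (2*(i+1) - 1) := by
  have h1 := Nat.add_one_mul_choose_eq (k+i) (2*i+1)
  have h2 := Nat.choose_succ_right_eq (k+i) (2*i+1)
  simp only [dd]
  simp only [show k+(i+1)-1 = k+i from by omega, show i+1+k-1 = k+i from by omega,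
    show 2*(i+1)-1 = 2*i+1 from by omega, show k+i-(2*i+1) = k-(i+1) from by omega] at h2 ⊢
  have key : 2 * ((i+1) * ((k+(i+1)).choose (2*(i+1)) + (k+i).choose (2*(i+1)))) = 2 * (k * (k+i).choose (2*i+1)) := by
    zify [hjk] at h1 h2 ⊢
    ring_nf
    ring_nf at h1 h2
    linear_combination h2 - h1
  omega

lemma key0 (K : Type*) [Field K] (x u : K) (hx : x ≠ 0) (hu : u ≠ 0) :
    (u*x - (u*x)⁻¹)^2 =
      ((x-x⁻¹)^2+2)*(u - u⁻¹)^2 - (u*x⁻¹ - (u*x⁻¹)⁻¹)^2 + 2*(x-x⁻¹)^2 := by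
  have h1 : x * x⁻¹ = 1 := mul_inv_cancel₀ hx
  have h2 : u * u⁻¹ = 1 := mul_inv_cancel₀ hu
  rw [mul_inv, mul_inv, inv_inv]
  linear_combination (2*u^2 + 2*u⁻¹^2 - 8*(u*u⁻¹) + 4) * h1 + (2*x^2 + 2*x⁻¹^2 - 4) * h2

lemma key (K : Type*) [Field K] (x : K) (hx : x ≠ 0) (k : ℕ) :
    (x^(k+2) - x⁻¹^(k+2))^2 =
      ((x-x⁻¹)^2+2)*(x^(k+1) - x⁻¹^(k+1))^2 - (x^k - x⁻¹^k)^2 + 2*(x-x⁻¹)^2 := by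
  have h := key0 K x (x^(k+1)) hx (pow_ne_zero _ hx)
  have e1 : x^(k+1)*x = x^(k+2) := by ring
  have e2 : x^(k+1)*x⁻¹ = x^k := by
    rw [pow_succ, mul_assoc, mul_inv_cancel₀ hx, mul_one]
  rw [e1, e2] at h
  rw [inv_pow, inv_pow, inv_pow]
  exact h

lemma sum_step (K : Type*) [Field K] (t : K) (k : ℕ) :
    ∑ j ∈ Finset.Icc 1 (k+2), (dd (k+2) j : K) * t^j
      = (t+2) * (∑ j ∈ Finset.Icc 1 (k+1), (dd (k+1) j : K) * t^j)
        - (∑ j ∈ Finset.Icc 1 k, (dd k j : K) * t^j) + 2*t := by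
  rw [← Finset.Ico_add_one_right_eq_Icc, ← Finset.Ico_add_one_right_eq_Icc, ← Finset.Ico_add_one_right_eq_Icc,
    Finset.sum_Ico_eq_sum_range, Finset.sum_Ico_eq_sum_range, Finset.sum_Ico_eq_sum_range]
  simp only [Nat.add_sub_cancel, show k+2+1-1 = k+2 from by omega,
    show k+1+1-1 = k+1 from by omega, show k+1-1 = k from by omega]
  have ext1 : ∑ i ∈ Finset.range (k+1), (dd (k+1) (1+i) : K) * t^(1+i)
      = ∑ i ∈ Finset.range (k+2), (dd (k+1) (1+i) : K) * t^(1+i) := by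
    apply Finset.sum_subset (Finset.range_subset_range.2 (by omega))
    intro i hi hni
    simp only [Finset.mem_range] at hi hni
    rw [dd_eq_zero (show k+1 < 1+i by omega)]
    simp
  have ext0 : ∑ i ∈ Finset.range k, (dd k (1+i) : K) * t^(1+i)
      = ∑ i ∈ Finset.range (k+2), (dd k (1+i) : K) * t^(1+i) := by
    apply Finset.sum_subset (Finset.range_subset_range.2 (by omega))
    intro i hi hni
    simp only [Finset.mem_range] at hi hni
    rw [dd_eq_zero (show k < 1+i by omega)]
    simp
  have hadd : (∑ i ∈ Finset.range (k+2), (dd (k+2) (1+i) : K) * t^(1+i))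
      + (∑ i ∈ Finset.range (k+2), (dd k (1+i) : K) * t^(1+i))
      = (∑ i ∈ Finset.range (k+2), (dd (k+1) i : K) * t^(1+i))
        + 2 * (∑ i ∈ Finset.range (k+2), (dd (k+1) (1+i) : K) * t^(1+i)) := by
    rw [← Finset.sum_add_distrib, Finset.mul_sum, ← Finset.sum_add_distrib]
    apply Finset.sum_congr rfl
    intro i _
    have h : ((dd (k+2) (i+1) + dd k (i+1) : ℕ) : K) = ((dd (k+1) i + 2 * dd (k+1) (i+1) : ℕ) : K) := by
      exact_mod_cast congrArg (Nat.cast (R := K)) (dd_rec k i)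
    push_cast at h
    rw [show 1+i = i+1 from by omega]
    linear_combination t^(i+1) * h
  have hshift : (∑ i ∈ Finset.range (k+2), (dd (k+1) i : K) * t^(1+i))
      = t * (∑ i ∈ Finset.range (k+1), (dd (k+1) (1+i) : K) * t^(1+i)) + 2*t := by
    rw [Finset.sum_range_succ']
    have h0 : dd (k+1) 0 = 2 := by simp [dd]
    rw [h0, Finset.mul_sum]
    have : ∀ i ∈ Finset.range (k+1),
        (dd (k+1) (i+1) : K) * t^(1+(i+1)) = t * ((dd (k+1) (1+i) : K) * t^(1+i)) := by
      intro i _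
      rw [show i+1 = 1+i from by omega]
      ring
    rw [Finset.sum_congr rfl this]
    push_cast
    ring
  linear_combination hadd + hshift + ext0 - 2 * ext1

lemma main_sum (K : Type*) [Field K] (x : K) (hx : x ≠ 0) (k : ℕ) :
    (x ^ k - x⁻¹ ^ k) ^ 2 = ∑ j ∈ Finset.Icc 1 k, (dd k j : K) * ((x - x⁻¹) ^ 2) ^ j := by
  have H : ∀ n : ℕ,
      ((x ^ n - x⁻¹ ^ n) ^ 2 = ∑ j ∈ Finset.Icc 1 n, (dd n j : K) * ((x - x⁻¹) ^ 2) ^ j) ∧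
      ((x ^ (n+1) - x⁻¹ ^ (n+1)) ^ 2 = ∑ j ∈ Finset.Icc 1 (n+1), (dd (n+1) j : K) * ((x - x⁻¹) ^ 2) ^ j) := by
    intro n
    induction n with
    | zero =>
      constructor
      · simp
      · have h1 : dd 1 1 = 1 := by simp [dd]
        simp [h1]
    | succ m ih =>
      refine ⟨ih.2, ?_⟩
      rw [key K x hx m, ih.1, ih.2, sum_step K ((x - x⁻¹)^2) m]
  exact (H k).1

/-- For every positive integer k, t_k = (q^{k/2} − q^{−k/2})^2 is given by the explicit
polynomial Σ_{j=1}^{k} (k/j)·C(j+k−1, 2j−1)·t^j in t = (q^{1/2} − q^{−1/2})^2, whose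
coefficients (k/j)·C(j+k−1,2j−1) are integers.  Here x plays the role of q^{1/2}. -/
theorem tk_polynomial_in_t (K : Type*) [Field K] [CharZero K] (x : K) (hx : x ≠ 0)
    (k : ℕ) (hk : 0 < k) :
    (∀ j ∈ Finset.Icc 1 k, (j : ℤ) ∣ (k * Nat.choose (j + k - 1) (2 * j - 1) : ℤ)) ∧
    (x ^ k - x⁻¹ ^ k) ^ 2 =
      ∑ j ∈ Finset.Icc 1 k,
        ((k * Nat.choose (j + k - 1) (2 * j - 1) : K) / (j : K)) * ((x - x⁻¹) ^ 2) ^ j := by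
  constructor
  · intro j hj
    rw [Finset.mem_Icc] at hj
    obtain ⟨i, rfl⟩ : ∃ i, j = i+1 := ⟨j-1, by omega⟩
    have h := dd_mul k i hj.2
    exact ⟨(dd k (i+1) : ℤ), by exact_mod_cast h.symm⟩
  · rw [main_sum K x hx k]
    apply Finset.sum_congr rfl
    intro j hj
    rw [Finset.mem_Icc] at hj
    obtain ⟨i, rfl⟩ : ∃ i, j = i+1 := ⟨j-1, by omega⟩
    have h := dd_mul k i hj.2
    have hj0 : ((i+1 : ℕ) : K) ≠ 0 := by exact_mod_cast Nat.succ_ne_zero i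
    congr 1
    rw [eq_div_iff hj0]
    have h' : k * (i + 1 + k - 1).choose (2 * (i + 1) - 1) = dd k (i+1) * (i+1) := by
      rw [← h, Nat.mul_comm]
    exact_mod_cast h'.symm
end

section
/- Let a_1,…,a_m, b_1,…,b_n be integers such that m+n is even and Σa_i + Σb_j is even. If the quotient Π_i[a_i] / Π_j[b_j] is a Laurent polynomial in q^{1/2} with integer coefficients, then it lies in ℤ[t] where t = q + q^{−1} − 2. -/
open LaurentPolynomial

namespace QnumAux

local notation "LP" => LaurentPolynomial ℤ

instance : CoeFun LP (fun _ => ℤ → ℤ) := ⟨fun x => x.coeff⟩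

lemma coeff_T (n k : ℤ) : (T n : LP) k = if n = k then 1 else 0 := Finsupp.single_apply

lemma coeff_one (k : ℤ) : (1 : LP) k = if 0 = k then 1 else 0 := Finsupp.single_apply

lemma coeff_mul_T (x : LP) (n k : ℤ) : (x * T n : LP) k = x (k - n) := by
  have := AddMonoidAlgebra.coeff_mul_single_apply x (1:ℤ) n k
  simpa [sub_eq_add_neg] using this

lemma coeff_C_mul (r : ℤ) (x : LP) (k : ℤ) : (C r * x : LP) k = r * x k := by
  rw [← single_eq_C]
  exact AddMonoidAlgebra.coeff_single_zero_mul x r k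

lemma coeff_C (r : ℤ) (k : ℤ) : (C r : LP) k = if k = 0 then r else 0 := by
  rw [← single_eq_C]
  rcases eq_or_ne k 0 with h | h
  · subst h; rw [if_pos rfl]; exact Finsupp.single_eq_same
  · rw [if_neg h]; exact Finsupp.single_eq_of_ne (by omega)

lemma coeff_sub (x y : LP) (k : ℤ) : (x - y : LP) k = x k - y k := rfl
lemma coeff_add (x y : LP) (k : ℤ) : (x + y : LP) k = x k + y k := rfl

noncomputable def u : LP := T 2 + T (-2)

lemma u_def : u = T 2 + T (-2) := rfl

lemma coeff_mul_u (x : LP) (k : ℤ) : (x * u : LP) k = x (k - 2) + x (k + 2) := by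
  rw [u, mul_add, coeff_add, coeff_mul_T, coeff_mul_T]
  norm_num [sub_neg_eq_add]

lemma invert_u : invert u = u := by
  rw [u, map_add, invert_T, invert_T]
  ring_nf

lemma coeff_u_pow_bound (m : ℕ) (k : ℤ) (h : (u ^ m : LP) k ≠ 0) :
    -(2*(m:ℤ)) ≤ k ∧ k ≤ 2*m := by
  induction m generalizing k with
  | zero =>
    rw [pow_zero, coeff_one] at h
    rcases eq_or_ne (0:ℤ) k with h0 | h0
    · omega
    · rw [if_neg h0] at h; exact absurd rfl h
  | succ m ih =>
    rw [pow_succ, coeff_mul_u] at h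
    have : (u ^ m : LP) (k - 2) ≠ 0 ∨ (u ^ m : LP) (k + 2) ≠ 0 := by
      by_contra hc; push_neg at hc; rw [hc.1, hc.2] at h; simp at h
    push_cast
    rcases this with h1 | h1
    · have := ih _ h1; omega
    · have := ih _ h1; omega

lemma coeff_u_pow_odd (m : ℕ) (k : ℤ) (hk : Odd k) : (u ^ m : LP) k = 0 := by
  induction m generalizing k with
  | zero =>
    rw [pow_zero, coeff_one, if_neg]
    rintro rfl; exact (Int.not_even_iff_odd.mpr hk) Even.zero
  | succ m ih =>
    rw [pow_succ, coeff_mul_u, ih _ (by rcases hk with ⟨t, ht⟩; exact ⟨t-1, by omega⟩),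
      ih _ (by rcases hk with ⟨t, ht⟩; exact ⟨t+1, by omega⟩), add_zero]

lemma coeff_u_pow_top (m : ℕ) : (u ^ m : LP) (2*m) = 1 := by
  induction m with
  | zero => simp [coeff_one]
  | succ m ih =>
    rw [pow_succ, coeff_mul_u]
    have h2 : (u ^ m : LP) (2*(m+1:ℕ) + 2) = 0 := by
      by_contra h
      have := coeff_u_pow_bound m _ h
      push_cast at this; omega
    have h1 : (2*(m+1:ℕ) - 2 : ℤ) = 2*m := by push_cast; ring
    rw [h1, ih, h2, add_zero]

lemma coeff_u_pow_symm (m : ℕ) (k : ℤ) : (u ^ m : LP) (-k) = (u ^ m : LP) k := by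
  have h : invert (u ^ m) = u ^ m := by rw [map_pow, invert_u]
  conv_rhs => rw [← h]
  rw [invert_apply]

lemma C_mem (S : Subalgebra ℤ LP) (r : ℤ) : (C r : LP) ∈ S := by
  have : algebraMap ℤ LP = C := RingHom.ext_int _ _
  rw [← this]; exact S.algebraMap_mem r

lemma key (N : ℕ) : ∀ f : LP,
    (∀ k : ℤ, f k ≠ 0 → -(N:ℤ) ≤ k ∧ k ≤ N) →
    (∀ k : ℤ, Odd k → f k = 0) →
    (∀ k : ℤ, f (-k) = f k) →
    f ∈ Algebra.adjoin ℤ ({u} : Set LP) := by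
  induction N with
  | zero =>
    intro f hbd _ _
    have hf : f = C (f 0) := by
      refine AddMonoidAlgebra.ext (Finsupp.ext ?_)
      intro k
      rcases eq_or_ne k 0 with h | h
      · subst h; rw [coeff_C, if_pos rfl]
      · have : f k = 0 := by
          by_contra hc
          have := hbd k hc
          omega
        rw [this, coeff_C, if_neg h]
    rw [hf]
    exact C_mem _ _
  | succ N ih =>
    intro f hbd hodd hsym
    by_cases hpar : Odd ((N:ℤ) + 1)
    · -- the extreme exponents are odd, so the bound improves for free
      apply ih f ?_ hodd hsym
      intro k hk
      have h1 := hbd k hk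
      have h2 : k ≠ (N:ℤ) + 1 := by rintro rfl; exact hk (hodd _ hpar)
      have h3 : k ≠ -((N:ℤ) + 1) := by
        rintro rfl
        exact hk (hodd _ (by rcases hpar with ⟨t, ht⟩; exact ⟨-t-1, by omega⟩))
      push_cast at h1 ⊢; omega
    · -- N+1 is even
      rw [Int.not_odd_iff_even] at hpar
      obtain ⟨m, hm⟩ : ∃ m : ℕ, (N:ℤ) + 1 = 2*(m:ℤ) := by
        rcases hpar with ⟨t, ht⟩
        refine ⟨t.toNat, ?_⟩
        have : (0:ℤ) ≤ t := by omega
        omega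
      set c : ℤ := f ((N:ℤ) + 1) with hc
      set g : LP := f - C c * u ^ m with hg
      have hgcoeff : ∀ k : ℤ, g k = f k - c * (u ^ m : LP) k := by
        intro k; rw [hg, coeff_sub, coeff_C_mul]
      have hwtop : (u ^ m : LP) ((N:ℤ)+1) = 1 := by rw [hm]; exact_mod_cast coeff_u_pow_top m
      have hk1 : g ((N:ℤ)+1) = 0 := by
        rw [hgcoeff, hwtop, mul_one, ← hc, sub_self]
      have hk2 : g (-((N:ℤ)+1)) = 0 := by
        rw [hgcoeff, hsym, coeff_u_pow_symm, hwtop, mul_one, ← hc, sub_self]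
      have hgmem : g ∈ Algebra.adjoin ℤ ({u} : Set LP) := by
        apply ih g
        · intro k hk
          have hne : f k ≠ 0 ∨ (u ^ m : LP) k ≠ 0 := by
            by_contra hcon; push_neg at hcon
            rw [hgcoeff, hcon.1, hcon.2, mul_zero, sub_zero] at hk
            exact hk rfl
          have hbK : -((N:ℤ)+1) ≤ k ∧ k ≤ (N:ℤ)+1 := by
            rcases hne with h1 | h1
            · have := hbd k h1; push_cast at this; omega
            · have := coeff_u_pow_bound m k h1; omega
          have e1 : k ≠ (N:ℤ) + 1 := by rintro rfl; exact hk hk1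
          have e2 : k ≠ -((N:ℤ) + 1) := by rintro rfl; exact hk hk2
          omega
        · intro k hk
          rw [hgcoeff, hodd k hk, coeff_u_pow_odd m k hk, mul_zero, sub_zero]
        · intro k
          rw [hgcoeff, hgcoeff, hsym, coeff_u_pow_symm]
      have hfeq : f = g + C c * u ^ m := by rw [hg, sub_add_cancel]
      rw [hfeq]
      exact Subalgebra.add_mem _ hgmem
        (Subalgebra.mul_mem _ (C_mem _ _)
          (Subalgebra.pow_mem _ (Algebra.self_mem_adjoin_singleton ℤ u) m))



/-- The monoid hom `n ↦ (-1)^n T^n`. -/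
noncomputable def Fm : Multiplicative ℤ →* LP where
  toFun n := C (((Multiplicative.toAdd n).negOnePow : ℤ)) * T (Multiplicative.toAdd n)
  map_one' := by simp [Int.negOnePow_zero]
  map_mul' x y := by
    simp only [toAdd_mul, Int.negOnePow_add, Units.val_mul, map_mul, T_add]
    ring

/-- The algebra map `T ↦ -T`. -/
noncomputable def tau : LP →ₐ[ℤ] LP := AddMonoidAlgebra.lift ℤ LP ℤ Fm

lemma tau_single (n : ℤ) (r : ℤ) :
    tau (AddMonoidAlgebra.single n r) = r • (C ((n.negOnePow : ℤ)) * T n) := by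
  rw [tau, AddMonoidAlgebra.lift_single]
  rfl

lemma tau_T (n : ℤ) : tau (T n) = C ((n.negOnePow : ℤ)) * T n := by
  have := tau_single n 1
  simpa using this

lemma tau_apply (f : LP) (k : ℤ) : tau f k = ((k.negOnePow : ℤ)) * f k := by
  induction f using AddMonoidAlgebra.induction_linear with
  | zero => simp
  | add f g hf hg =>
    rw [map_add, coeff_add, coeff_add, hf, hg]
    ring
  | single n r =>
    rw [tau_single]
    rw [AddMonoidAlgebra.coeff_smul_apply, coeff_C_mul, coeff_T, AddMonoidAlgebra.coeff_single, Finsupp.single_apply]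
    rcases eq_or_ne n k with rfl | h
    · rw [if_pos rfl, if_pos rfl]; simp [mul_comm]
    · rw [if_neg h, if_neg h]; simp

lemma qnum_ne_zero {c : ℤ} (hc : c ≠ 0) : (T c - T (-c) : LP) ≠ 0 := by
  rw [sub_ne_zero]
  intro h
  have h1 : (T c : LP) c = (T (-c) : LP) c := by rw [h]
  rw [coeff_T, coeff_T, if_pos rfl, if_neg (by omega)] at h1
  exact one_ne_zero h1

lemma prod_negOnePow {ι : Type*} (s : Finset ι) (g : ι → ℤ) :
    ∏ i ∈ s, ((g i).negOnePow : ℤ) = (((∑ i ∈ s, g i).negOnePow : ℤ)) := by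
  induction s using Finset.cons_induction with
  | empty => simp
  | cons i s hi ih =>
      rw [Finset.prod_cons, Finset.sum_cons, ih, Int.negOnePow_add, Units.val_mul]


end QnumAux


open LaurentPolynomial in
open QnumAux in
/-- If m+n and Σa_i + Σb_j are even and the quotient Π_i[a_i] / Π_j[b_j] is a Laurent
polynomial f in q^{1/2} with integer coefficients (i.e. f·Π[b_j] = Π[a_i] with all
b_j ≠ 0), then f lies in ℤ[t], t = q + q^{−1} − 2.  Here T is q^{1/2}. -/
theorem quotient_qnum_mem_Z_t (m n : ℕ) (a : Fin m → ℤ) (b : Fin n → ℤ)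
    (hb : ∀ j, b j ≠ 0) (hmn : Even (m + n))
    (hsum : Even (∑ i, a i + ∑ j, b j))
    (f : LaurentPolynomial ℤ)
    (hf : f * ∏ j, (T (b j) - T (-(b j))) = ∏ i, (T (a i) - T (-(a i)))) :
    ∃ P : Polynomial ℤ,
      Polynomial.aeval (T 2 + T (-2) - 2 : LaurentPolynomial ℤ) P = f := by
  classical
  set B : LaurentPolynomial ℤ := ∏ j, (T (b j) - T (-(b j))) with hBdef
  set A : LaurentPolynomial ℤ := ∏ i, (T (a i) - T (-(a i))) with hAdef
  have hBne : B ≠ 0 :=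
    Finset.prod_ne_zero_iff.mpr fun j _ => qnum_ne_zero (hb j)
  -- symmetry under T ↦ T⁻¹
  have hinvq : ∀ c : ℤ, invert (T c - T (-c) : LaurentPolynomial ℤ) = -(T c - T (-c)) := by
    intro c; rw [map_sub, invert_T, invert_T, neg_neg]; exact (neg_sub _ _).symm
  have hprodneg : ∀ (k : ℕ) (g : Fin k → LaurentPolynomial ℤ),
      (∏ i, -(g i)) = (-1) ^ k * ∏ i, g i := by
    intro k g
    calc ∏ i, -(g i) = ∏ i, ((-1) * g i) := by simp only [neg_one_mul]
      _ = (∏ _i : Fin k, (-1 : LaurentPolynomial ℤ)) * ∏ i, g i := Finset.prod_mul_distrib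
      _ = (-1) ^ k * ∏ i, g i := by rw [Finset.prod_const, Finset.card_univ, Fintype.card_fin]
  have e1 : invert f * ((-1) ^ n * B) = (-1) ^ m * A := by
    have h := congrArg invert hf
    rw [map_mul, map_prod, map_prod] at h
    simp_rw [hinvq] at h
    rw [hprodneg n _, hprodneg m _] at h
    rw [hBdef, hAdef]
    exact h
  have hss : ((-1 : LaurentPolynomial ℤ)) ^ n * (-1) ^ n = 1 := by
    rw [← pow_add]; exact Even.neg_one_pow ⟨n, rfl⟩
  have hsgn : ((-1 : LaurentPolynomial ℤ)) ^ m = (-1) ^ n := by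
    by_cases he : Even m
    · rw [he.neg_one_pow, ((Nat.even_add.mp hmn).mp he).neg_one_pow]
    · rw [(Nat.not_even_iff_odd.mp he).neg_one_pow,
        (Nat.not_even_iff_odd.mp fun hn' => he ((Nat.even_add.mp hmn).mpr hn')).neg_one_pow]
  have e3 : invert f * (-1) ^ n = (-1) ^ m * f := by
    apply mul_right_cancel₀ hBne
    calc invert f * (-1) ^ n * B = invert f * ((-1) ^ n * B) := by ring
      _ = (-1) ^ m * A := e1
      _ = (-1) ^ m * (f * B) := by rw [← hf]
      _ = (-1) ^ m * f * B := by ring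
  have hinvf : invert f = f := by
    calc invert f = invert f * (-1) ^ n * (-1) ^ n := by rw [mul_assoc, hss, mul_one]
      _ = (-1) ^ m * f * (-1) ^ n := by rw [e3]
      _ = f * ((-1) ^ n * (-1) ^ n) := by rw [hsgn]; ring
      _ = f := by rw [hss, mul_one]
  have hsymf : ∀ k : ℤ, f (-k) = f k := by
    intro k
    conv_rhs => rw [← hinvf]
    rw [invert_apply]
  -- symmetry under T ↦ -T
  have htq : ∀ c : ℤ, tau (T c - T (-c) : LaurentPolynomial ℤ)
      = C ((c.negOnePow : ℤ)) * (T c - T (-c)) := by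
    intro c
    rw [map_sub, tau_T, tau_T, Int.negOnePow_neg, mul_sub]
  have e1' : tau f * (C (((∑ j, b j).negOnePow : ℤ)) * B)
      = C (((∑ i, a i).negOnePow : ℤ)) * A := by
    have h := congrArg tau hf
    rw [map_mul, map_prod, map_prod] at h
    simp_rw [htq] at h
    rw [Finset.prod_mul_distrib, Finset.prod_mul_distrib,
      ← map_prod (C : ℤ →+* LaurentPolynomial ℤ) (fun x => ((b x).negOnePow : ℤ)) Finset.univ,
      ← map_prod (C : ℤ →+* LaurentPolynomial ℤ) (fun x => ((a x).negOnePow : ℤ)) Finset.univ,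
      prod_negOnePow, prod_negOnePow] at h
    rw [hBdef, hAdef]
    exact h
  have hCss : (C (((∑ j, b j).negOnePow : ℤ)) : LaurentPolynomial ℤ)
      * C (((∑ j, b j).negOnePow : ℤ)) = 1 := by
    rw [← map_mul]
    have : ((∑ j, b j).negOnePow : ℤ) * ((∑ j, b j).negOnePow : ℤ) = 1 := by
      rw [← Units.val_mul, Int.units_mul_self, Units.val_one]
    rw [this, map_one]
  have hsasb : ((∑ i, a i).negOnePow) = ((∑ j, b j).negOnePow) := by
    have h1 : (∑ i, a i).negOnePow * (∑ j, b j).negOnePow = 1 := by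
      rw [← Int.negOnePow_add]
      exact Int.negOnePow_even _ hsum
    calc (∑ i, a i).negOnePow
        = (∑ i, a i).negOnePow * ((∑ j, b j).negOnePow * (∑ j, b j).negOnePow) := by
          rw [Int.units_mul_self, mul_one]
      _ = ((∑ i, a i).negOnePow * (∑ j, b j).negOnePow) * (∑ j, b j).negOnePow := by
          rw [mul_assoc]
      _ = (∑ j, b j).negOnePow := by rw [h1, one_mul]
  have e3' : tau f * C (((∑ j, b j).negOnePow : ℤ))
      = C (((∑ j, b j).negOnePow : ℤ)) * f := by
    apply mul_right_cancel₀ hBne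
    calc tau f * C (((∑ j, b j).negOnePow : ℤ)) * B
        = tau f * (C (((∑ j, b j).negOnePow : ℤ)) * B) := by ring
      _ = C (((∑ i, a i).negOnePow : ℤ)) * A := e1'
      _ = C (((∑ j, b j).negOnePow : ℤ)) * (f * B) := by rw [hsasb, ← hf]
      _ = C (((∑ j, b j).negOnePow : ℤ)) * f * B := by ring
  have htauf : tau f = f := by
    calc tau f = tau f * C (((∑ j, b j).negOnePow : ℤ))
          * C (((∑ j, b j).negOnePow : ℤ)) := by rw [mul_assoc, hCss, mul_one]
      _ = C (((∑ j, b j).negOnePow : ℤ)) * f * C (((∑ j, b j).negOnePow : ℤ)) := by rw [e3']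
      _ = f * (C (((∑ j, b j).negOnePow : ℤ)) * C (((∑ j, b j).negOnePow : ℤ))) := by ring
      _ = f := by rw [hCss, mul_one]
  have hoddf : ∀ k : ℤ, Odd k → f k = 0 := by
    intro k hk
    have h := tau_apply f k
    rw [htauf, Int.negOnePow_odd _ hk] at h
    simp only [Units.val_neg, Units.val_one, neg_mul, one_mul] at h
    omega
  -- the bound
  set N : ℕ := f.coeff.support.sup (fun k : ℤ => k.natAbs) with hN
  have hbd : ∀ k : ℤ, f k ≠ 0 → -(N:ℤ) ≤ k ∧ k ≤ N := by
    intro k hk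
    have hmem : k ∈ f.coeff.support := Finsupp.mem_support_iff.mpr hk
    have h2 : k.natAbs ≤ N := Finset.le_sup (f := fun k : ℤ => k.natAbs) hmem
    omega
  have hmem := key N f hbd hoddf hsymf
  rw [Algebra.adjoin_singleton_eq_range_aeval] at hmem
  obtain ⟨P, hP⟩ := hmem
  refine ⟨P.comp (Polynomial.X + Polynomial.C 2), ?_⟩
  rw [Polynomial.aeval_comp]
  have hx : (Polynomial.aeval (T 2 + T (-2) - 2 : LaurentPolynomial ℤ))
      (Polynomial.X + Polynomial.C 2 : Polynomial ℤ) = u := by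
    rw [u_def]
    simp only [map_add, Polynomial.aeval_X, Polynomial.aeval_C, map_ofNat]
    ring
  rw [hx]
  exact hP
end

section
/- For positive integers k and a, the quotient [ka]/[a] = Σ_{i=0}^{k−1} q^{(k−1)a/2 − ia} is a polynomial in y = q^{1/2} + q^{−1/2} − 2 with integer coefficients; moreover, if k is odd or a is even, then [ka]/[a] ∈ ℤ[t] (t = q + q^{−1} − 2) with constant term k. -/
open LaurentPolynomial Polynomial

private lemma cheb (c : ℤ) (n : ℕ) :
    ∃ P : Polynomial ℤ, aeval (T c + T (-c) : LaurentPolynomial ℤ) P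
      = T (c * n) + T (-(c * n)) := by
  suffices h : ∀ m : ℕ,
      (∃ P : Polynomial ℤ, aeval (T c + T (-c) : LaurentPolynomial ℤ) P
        = T (c * m) + T (-(c * m))) ∧
      (∃ P : Polynomial ℤ, aeval (T c + T (-c) : LaurentPolynomial ℤ) P
        = T (c * (m+1)) + T (-(c * (m+1)))) from (h n).1
  intro m
  induction m with
  | zero =>
    refine ⟨⟨Polynomial.C 2, ?_⟩, ⟨X, ?_⟩⟩
    · rw [aeval_C]
      simp only [Nat.cast_zero, mul_zero, neg_zero, T_zero]
      norm_num
    · simp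
  | succ m ih =>
    obtain ⟨⟨P, hP⟩, ⟨Q, hQ⟩⟩ := ih
    refine ⟨⟨Q, hQ⟩, ⟨X * Q - P, ?_⟩⟩
    rw [map_sub, map_mul, aeval_X, hP, hQ]
    push_cast
    have e1 : (c * ((m:ℤ)+1+1)) = c + c * ((m:ℤ)+1) := by ring
    have e2 : (-(c + c * ((m:ℤ)+1))) = -c + -(c * ((m:ℤ)+1)) := by ring
    have e3 : (c * (m:ℤ)) = -c + c * ((m:ℤ)+1) := by ring
    have e4 : (-(c * (m:ℤ))) = c + -(c * ((m:ℤ)+1)) := by ring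
    rw [e1, e2, e4, e3, T_add, T_add, T_add, T_add]
    ring

private lemma sum_step_s8 (a k : ℕ) :
    (∑ i ∈ Finset.range (k+2),
        (T ((((k+2:ℕ) : ℤ) - 1) * a - 2 * i * a) : LaurentPolynomial ℤ))
      = (∑ i ∈ Finset.range k, T (((k:ℤ) - 1) * a - 2 * i * a))
        + (T (((k:ℤ)+1) * a) + T (-(((k:ℤ)+1) * a))) := by
  rw [Finset.sum_range_succ', Finset.sum_range_succ]
  push_cast
  have e0 : ((k:ℤ) + 2 - 1) * a - 0 * a = ((k:ℤ)+1) * a := by ring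
  have ek : ((k:ℤ) + 2 - 1) * a - 2 * ((k:ℤ)+1) * a = -(((k:ℤ)+1) * a) := by ring
  rw [e0, ek]
  have : ∀ i ∈ Finset.range k, (T (((k:ℤ) + 2 - 1) * a - 2 * ((i:ℤ)+1) * a) : LaurentPolynomial ℤ)
      = T (((k:ℤ) - 1) * a - 2 * i * a) := by
    intro i _; congr 1; ring
  rw [Finset.sum_congr rfl this]
  ring

private lemma part1 (k a : ℕ) :
    ((T ((k * a : ℕ) : ℤ) - T (-((k * a : ℕ) : ℤ)) : LaurentPolynomial ℤ)
        = (T (a : ℤ) - T (-(a : ℤ))) *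
            ∑ i ∈ Finset.range k, T (((k : ℤ) - 1) * a - 2 * i * a)) := by
  rw [Finset.mul_sum]
  have : ∀ i ∈ Finset.range k,
      (T (a:ℤ) - T (-(a:ℤ))) * (T (((k:ℤ) - 1) * a - 2 * i * a) : LaurentPolynomial ℤ)
      = (fun j : ℕ => (T ((k:ℤ)*a - 2*j*a) : LaurentPolynomial ℤ)) i
        - (fun j : ℕ => (T ((k:ℤ)*a - 2*j*a) : LaurentPolynomial ℤ)) (i+1) := by
    intro i _
    simp only
    rw [sub_mul, ← T_add, ← T_add]
    congr 2 <;> push_cast <;> ring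
  rw [Finset.sum_congr rfl this, Finset.sum_range_sub']
  push_cast
  congr 2 <;> ring

private lemma sumpoly_x (a k : ℕ) :
    ∃ P : Polynomial ℤ, aeval (T 1 + T (-1) : LaurentPolynomial ℤ) P
      = ∑ i ∈ Finset.range k, T (((k:ℤ) - 1) * a - 2 * i * a) := by
  induction k using Nat.twoStepInduction with
  | zero => exact ⟨0, by simp⟩
  | one => exact ⟨1, by norm_num⟩
  | more k ih _ =>
    obtain ⟨P, hP⟩ := ih
    obtain ⟨Q, hQ⟩ := cheb 1 ((k+1)*a)
    refine ⟨P + Q, ?_⟩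
    rw [map_add, hP, hQ, sum_step_s8]
    congr 2 <;> push_cast <;> ring

private lemma sumpoly_z_odd (a m : ℕ) :
    ∃ P : Polynomial ℤ, aeval (T 2 + T (-2) : LaurentPolynomial ℤ) P
      = ∑ i ∈ Finset.range (2*m+1), T ((((2*m+1:ℕ):ℤ) - 1) * a - 2 * i * a) := by
  induction m with
  | zero => exact ⟨1, by norm_num⟩
  | succ m ih =>
    obtain ⟨P, hP⟩ := ih
    obtain ⟨Q, hQ⟩ := cheb 2 ((m+1)*a)
    refine ⟨P + Q, ?_⟩
    rw [show (2*(m+1)+1 : ℕ) = (2*m+1)+2 from by ring, sum_step_s8, map_add, hP, hQ]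
    congr 2 <;> push_cast <;> ring

private lemma sumpoly_z_even (a b k : ℕ) (hab : a = b + b) :
    ∃ P : Polynomial ℤ, aeval (T 2 + T (-2) : LaurentPolynomial ℤ) P
      = ∑ i ∈ Finset.range k, T (((k:ℤ) - 1) * a - 2 * i * a) := by
  induction k using Nat.twoStepInduction with
  | zero => exact ⟨0, by simp⟩
  | one => exact ⟨1, by norm_num⟩
  | more k ih _ =>
    obtain ⟨P, hP⟩ := ih
    obtain ⟨Q, hQ⟩ := cheb 2 (b*(k+1))
    refine ⟨P + Q, ?_⟩
    rw [sum_step_s8, map_add, hP, hQ]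
    congr 2 <;> push_cast [hab] <;> ring

private lemma shift2 {s v : LaurentPolynomial ℤ} (h : ∃ P : Polynomial ℤ, aeval v P = s) :
    ∃ P : Polynomial ℤ, aeval (v - 2) P = s := by
  obtain ⟨P, hP⟩ := h
  refine ⟨P.comp (X + Polynomial.C 2), ?_⟩
  rw [aeval_comp, map_add, aeval_X, aeval_C]
  rw [show algebraMap ℤ (LaurentPolynomial ℤ) 2 = 2 from map_ofNat _ 2, sub_add_cancel, hP]

private noncomputable def phiOne : LaurentPolynomial ℤ →ₐ[ℤ] ℤ :=
  (AddMonoidAlgebra.lift ℤ ℤ ℤ) 1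

private lemma phiOne_T (n : ℤ) : phiOne (T n) = 1 := by
  show ((AddMonoidAlgebra.lift ℤ ℤ ℤ) 1) (AddMonoidAlgebra.single n 1) = 1
  rw [AddMonoidAlgebra.lift_single]
  simp

open LaurentPolynomial in
/-- For positive integers k, a: [ka]/[a] = Σ_{i=0}^{k−1} q^{(k−1)a/2 − ia}, it is a
polynomial in y = q^{1/2} + q^{−1/2} − 2 with integer coefficients, and if k is odd
or a is even it lies in ℤ[t] (t = q + q^{−1} − 2) with constant term k.
Here T is q^{1/2}, [n] = T n − T (−n), and q^{(k−1)a/2 − ia} = T((k−1)a − 2ia). -/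
theorem qnum_ratio (k a : ℕ) (hk : 0 < k) (ha : 0 < a) :
    ((T ((k * a : ℕ) : ℤ) - T (-((k * a : ℕ) : ℤ)) : LaurentPolynomial ℤ)
        = (T (a : ℤ) - T (-(a : ℤ))) *
            ∑ i ∈ Finset.range k, T (((k : ℤ) - 1) * a - 2 * i * a)) ∧
    (∃ P : Polynomial ℤ,
        Polynomial.aeval (T 1 + T (-1) - 2 : LaurentPolynomial ℤ) P
          = ∑ i ∈ Finset.range k, T (((k : ℤ) - 1) * a - 2 * i * a)) ∧
    ((Odd k ∨ Even a) →
      ∃ P : Polynomial ℤ,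
        Polynomial.aeval (T 2 + T (-2) - 2 : LaurentPolynomial ℤ) P
            = ∑ i ∈ Finset.range k, T (((k : ℤ) - 1) * a - 2 * i * a) ∧
          P.coeff 0 = k) := by
  refine ⟨part1 k a, shift2 (sumpoly_x a k), ?_⟩
  intro h
  have hz : ∃ P : Polynomial ℤ,
      Polynomial.aeval (T 2 + T (-2) - 2 : LaurentPolynomial ℤ) P
        = ∑ i ∈ Finset.range k, T (((k : ℤ) - 1) * a - 2 * i * a) := by
    rcases h with hodd | heven
    · obtain ⟨m, rfl⟩ := hodd
      exact shift2 (sumpoly_z_odd a m)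
    · obtain ⟨b, rfl⟩ := heven
      exact shift2 (sumpoly_z_even (b + b) b k rfl)
  obtain ⟨P, hP⟩ := hz
  refine ⟨P, hP, ?_⟩
  have hzero : phiOne (T 2 + T (-2) - 2 : LaurentPolynomial ℤ) = 0 := by
    rw [map_sub, map_add, phiOne_T, phiOne_T, show phiOne 2 = 2 from map_ofNat _ 2]
    ring
  have hl : P.coeff 0 = phiOne (Polynomial.aeval (T 2 + T (-2) - 2 : LaurentPolynomial ℤ) P) := by
    rw [← aeval_algHom_apply, hzero]
    simp [Polynomial.coeff_zero_eq_eval_zero]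
  rw [hl, hP, map_sum]
  simp [phiOne_T]
end

section
/- For a positive integer k even and a odd positive, the remainder of [ka]/[a] ∈ ℤ[y] upon division by y(y+4) equals k(1 + y/2), i.e., [ka]/[a] ≡ k + (k/2)y mod y(y+4) in ℚ[y]. -/
open LaurentPolynomial Polynomial

noncomputable def evalAt (u : ℚˣ) : LaurentPolynomial ℚ →ₐ[ℚ] ℚ :=
  AddMonoidAlgebra.lift ℚ ℚ ℤ ((Units.coeHom ℚ).comp (zpowersHom ℚˣ u))

lemma evalAt_T (u : ℚˣ) (n : ℤ) : evalAt u (T n) = (u : ℚ) ^ n := by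
  rw [evalAt, T, AddMonoidAlgebra.lift_single]
  simp [zpowersHom_apply]

open LaurentPolynomial in
/-- For k even and a odd positive, the remainder of [ka]/[a] ∈ ℤ[y] upon division by
y(y+4) equals k(1 + y/2): if P ∈ ℚ[Y] satisfies P(y) = [ka]/[a]
(with y = q^{1/2} + q^{−1/2} − 2, T = q^{1/2} and
[ka]/[a] = Σ_{i=0}^{k−1} T((k−1)a − 2ia)), then
Y(Y+4) ∣ P − (k + (k/2)·Y) in ℚ[Y]. -/
theorem qnum_ratio_remainder (k a : ℕ) (hk : 0 < k) (hke : Even k) (ha : Odd a)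
    (P : Polynomial ℚ)
    (hP : Polynomial.aeval (T 1 + T (-1) - 2 : LaurentPolynomial ℚ) P
        = ∑ i ∈ Finset.range k, T (((k : ℤ) - 1) * a - 2 * i * a)) :
    (Polynomial.X * (Polynomial.X + 4)) ∣
      (P - (Polynomial.C (k : ℚ) + Polynomial.C ((k : ℚ) / 2) * Polynomial.X)) := by
  set r : Polynomial ℚ := P - (Polynomial.C (k : ℚ) + Polynomial.C ((k : ℚ) / 2) * Polynomial.X)
    with hr
  -- evaluation at 0
  have h0 : P.eval 0 = k := by
    have h := congrArg (evalAt 1) hP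
    rw [map_sum] at h
    simp only [evalAt_T] at h
    rw [← Polynomial.aeval_algHom_apply] at h
    simp only [map_sub, map_add, evalAt_T, map_ofNat] at h
    norm_num at h
    simpa using h
  -- evaluation at -4
  have h4 : P.eval (-4) = -k := by
    have h := congrArg (evalAt (-1)) hP
    rw [map_sum] at h
    simp only [evalAt_T] at h
    rw [← Polynomial.aeval_algHom_apply] at h
    simp only [map_sub, map_add, evalAt_T, map_ofNat] at h
    have he : ∀ i : ℕ, (((-1 : ℚˣ) : ℚ)) ^ (((k : ℤ) - 1) * a - 2 * i * a) = -1 := by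
      intro i
      have hodd : Odd (((k : ℤ) - 1) * a - 2 * i * a) := by
        have h1 : Odd ((k : ℤ) - 1) :=
          (Int.even_coe_nat k).2 hke |>.sub_odd odd_one
        have h2 : Odd (((k : ℤ) - 1) * a) := h1.mul (Int.odd_coe_nat a |>.2 ha)
        exact h2.sub_even ⟨i * a, by ring⟩
      simpa using hodd.neg_one_zpow
    rw [Finset.sum_congr rfl fun i _ => he i] at h
    simp only [Units.val_neg, Units.val_one] at h
    have : ((-1 : ℚ)) ^ (1 : ℤ) + (-1 : ℚ) ^ (-1 : ℤ) - 2 = -4 := by norm_num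
    rw [this] at h
    simp only [Finset.sum_const, Finset.card_range, nsmul_eq_mul, mul_neg_one] at h
    simpa using h
  have hroot0 : r.IsRoot 0 := by
    simp [hr, Polynomial.IsRoot, h0]
  have hroot4 : r.IsRoot (-4) := by
    simp [hr, Polynomial.IsRoot, h4]
    ring
  have d0 : (Polynomial.X : Polynomial ℚ) ∣ r := by
    have := (Polynomial.dvd_iff_isRoot (p := r) (a := (0:ℚ))).2 hroot0
    simpa using this
  have d4 : (Polynomial.X + 4 : Polynomial ℚ) ∣ r := by
    have := (Polynomial.dvd_iff_isRoot (p := r) (a := (-4:ℚ))).2 hroot4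
    have he : (Polynomial.X - Polynomial.C (-4 : ℚ)) = Polynomial.X + 4 := by
      simp only [map_neg, sub_neg_eq_add, map_ofNat]
    rwa [he] at this
  have hcop : IsCoprime (Polynomial.X : Polynomial ℚ) (Polynomial.X + 4) := by
    have := Polynomial.isCoprime_X_sub_C_of_isUnit_sub
      (a := (0:ℚ)) (b := (-4:ℚ)) (by norm_num)
    simpa [sub_eq_add_neg, map_ofNat] using this
  exact hcop.mul_dvd d0 d4
end

section
/- Let a, b, c be positive integers with gcd(a,b,c) = 1. Then the rational function [lcm(a,b,c)]·[gcd(a,b)]·[gcd(b,c)]·[gcd(c,a)] / ([a][b][c][1]) is a polynomial in t = q + q^{−1} − 2 with integer coefficients, and its constant term (value at t = 0, i.e., q = 1) is 1. -/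
open Polynomial LaurentPolynomial

namespace QnumAux

/-- A prime power dividing an lcm divides one of the factors. -/
lemma ppow_dvd_lcm {p k m n : ℕ} (hp : p.Prime) (hm : m ≠ 0) (hn : n ≠ 0)
    (h : p ^ k ∣ Nat.lcm m n) : p ^ k ∣ m ∨ p ^ k ∣ n := by
  rw [hp.pow_dvd_iff_le_factorization (Nat.lcm_ne_zero hm hn), Nat.factorization_lcm hm hn,
    Finsupp.sup_apply, le_sup_iff] at h
  rcases h with h | h
  · exact Or.inl ((hp.pow_dvd_iff_le_factorization hm).mpr h)
  · exact Or.inr ((hp.pow_dvd_iff_le_factorization hn).mpr h)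

lemma dvd_gcd_iff' {d m n : ℕ} : d ∣ Nat.gcd m n ↔ d ∣ m ∧ d ∣ n :=
  ⟨fun h => ⟨h.trans (Nat.gcd_dvd_left _ _), h.trans (Nat.gcd_dvd_right _ _)⟩,
    fun h => Nat.dvd_gcd h.1 h.2⟩

variable (a b c : ℕ)

/-- the big lcm -/
def Lv : ℕ := Nat.lcm a (Nat.lcm b c)

/-- The quotient polynomial: product of cyclotomics at indices dividing the lcm but
none of a, b, c. -/
noncomputable def Ep : Polynomial ℤ :=
  ∏ d ∈ (Lv a b c).divisors.filter (fun d => ¬(d ∣ a ∨ d ∣ b ∨ d ∣ c)), cyclotomic d ℤ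

variable {a b c}
variable (ha : 0 < a) (hb : 0 < b) (hc : 0 < c) (h1 : Nat.gcd a (Nat.gcd b c) = 1)

include ha hb hc in
lemma Lv_ne : Lv a b c ≠ 0 := Nat.lcm_ne_zero ha.ne' (Nat.lcm_ne_zero hb.ne' hc.ne')

include ha hb hc in
lemma ppow_dvd_Lv {p k : ℕ} (hp : p.Prime) (hd : p ^ k ∣ Lv a b c) :
    p ^ k ∣ a ∨ p ^ k ∣ b ∨ p ^ k ∣ c := by
  rcases ppow_dvd_lcm hp ha.ne' (Nat.lcm_ne_zero hb.ne' hc.ne') hd with h | h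
  · exact Or.inl h
  · rcases ppow_dvd_lcm hp hb.ne' hc.ne' h with h | h
    · exact Or.inr (Or.inl h)
    · exact Or.inr (Or.inr h)

include ha hb hc h1 in
lemma step1 :
    (((X : Polynomial ℤ) ^ a - 1) * (X ^ b - 1) * (X ^ c - 1) * (X ^ 1 - 1)) * Ep a b c =
      (X ^ (Lv a b c) - 1) * (X ^ (Nat.gcd a b) - 1) * (X ^ (Nat.gcd b c) - 1) *
        (X ^ (Nat.gcd c a) - 1) := by
  have hL0 : Lv a b c ≠ 0 := Lv_ne ha hb hc
  have key : ∀ n : ℕ, 0 < n → n ∣ Lv a b c →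
      ((X : Polynomial ℤ) ^ n - 1) =
        ∏ d ∈ (Lv a b c).divisors, if d ∣ n then cyclotomic d ℤ else 1 := by
    intro n hn0 hnL
    rw [← prod_cyclotomic_eq_X_pow_sub_one hn0 ℤ, ← Nat.divisors_filter_dvd_of_dvd hL0 hnL,
      Finset.prod_filter]
  have hba : b ∣ Lv a b c := (Nat.dvd_lcm_left b c).trans (Nat.dvd_lcm_right _ _)
  have hca : c ∣ Lv a b c := (Nat.dvd_lcm_right b c).trans (Nat.dvd_lcm_right _ _)
  have haa : a ∣ Lv a b c := Nat.dvd_lcm_left _ _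
  rw [key a ha haa, key b hb hba, key c hc hca, key 1 one_pos (one_dvd _),
    key (Lv a b c) (Nat.pos_of_ne_zero hL0) dvd_rfl,
    key (Nat.gcd a b) (Nat.gcd_pos_of_pos_left b ha) ((Nat.gcd_dvd_left a b).trans haa),
    key (Nat.gcd b c) (Nat.gcd_pos_of_pos_left c hb) ((Nat.gcd_dvd_left b c).trans hba),
    key (Nat.gcd c a) (Nat.gcd_pos_of_pos_left a hc) ((Nat.gcd_dvd_left c a).trans hca),
    Ep, Finset.prod_filter, ← Finset.prod_mul_distrib, ← Finset.prod_mul_distrib,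
    ← Finset.prod_mul_distrib, ← Finset.prod_mul_distrib, ← Finset.prod_mul_distrib,
    ← Finset.prod_mul_distrib, ← Finset.prod_mul_distrib]
  apply Finset.prod_congr rfl
  intro d hd
  have hdL : d ∣ Lv a b c := (Nat.mem_divisors.mp hd).1
  have hone : d ∣ 1 ↔ d ∣ a ∧ d ∣ b ∧ d ∣ c := by
    constructor
    · intro hd1
      have : d = 1 := Nat.dvd_one.mp hd1
      subst this
      exact ⟨one_dvd _, one_dvd _, one_dvd _⟩
    · rintro ⟨hA, hB, hC⟩
      rw [← h1]
      exact Nat.dvd_gcd hA (Nat.dvd_gcd hB hC)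
  by_cases hA : d ∣ a <;> by_cases hB : d ∣ b <;> by_cases hC : d ∣ c <;>
    simp [hA, hB, hC, hdL, hone, dvd_gcd_iff']

lemma Ep_monic : (Ep a b c).Monic :=
  monic_prod_of_monic _ _ fun d _ => cyclotomic.monic d ℤ

lemma hXn (n : ℕ) : ((X : Polynomial ℤ) ^ n - 1).natDegree = n := by
  simpa using natDegree_X_pow_sub_C (n := n) (r := (1 : ℤ))

lemma mXn {n : ℕ} (hn : 0 < n) : ((X : Polynomial ℤ) ^ n - 1).Monic := by
  simpa using monic_X_pow_sub_C (1 : ℤ) hn.ne'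

include ha hb hc h1 in
lemma deg_eq :
    Lv a b c + Nat.gcd a b + Nat.gcd b c + Nat.gcd c a = a + b + c + 1 + (Ep a b c).natDegree := by
  have hs := congrArg natDegree (step1 ha hb hc h1)
  have mA := mXn ha
  have mB := mXn hb
  have mC := mXn hc
  have m1 : ((X : Polynomial ℤ) ^ 1 - 1).Monic := mXn one_pos
  have mL := mXn (Nat.pos_of_ne_zero (Lv_ne ha hb hc))
  have mab := mXn (Nat.gcd_pos_of_pos_left b ha)
  have mbc := mXn (Nat.gcd_pos_of_pos_left c hb)
  have mca := mXn (Nat.gcd_pos_of_pos_left a hc)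
  rw [Monic.natDegree_mul (((mA.mul mB).mul mC).mul m1) (Ep_monic),
    Monic.natDegree_mul ((mA.mul mB).mul mC) m1, Monic.natDegree_mul (mA.mul mB) mC,
    Monic.natDegree_mul mA mB,
    Monic.natDegree_mul ((mL.mul mab).mul mbc) mca, Monic.natDegree_mul (mL.mul mab) mbc,
    Monic.natDegree_mul mL mab, hXn, hXn, hXn, hXn, hXn, hXn, hXn, hXn] at hs
  omega

include ha hb hc in
lemma deg_even : Even (Ep a b c).natDegree := by
  rw [Ep, natDegree_prod _ _ fun d _ => cyclotomic_ne_zero d ℤ]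
  rw [even_iff_two_dvd]
  apply Finset.dvd_sum
  intro d hd
  rw [Finset.mem_filter] at hd
  obtain ⟨hdF, hcond⟩ := hd
  have hdL : d ∣ Lv a b c := (Nat.mem_divisors.mp hdF).1
  have hd1 : d ≠ 1 := by rintro rfl; exact hcond (Or.inl (one_dvd _))
  have hd0 : d ≠ 0 := (Nat.pos_of_mem_divisors hdF).ne'
  have hd2 : d ≠ 2 := by
    rintro rfl
    have := ppow_dvd_Lv ha hb hc Nat.prime_two (k := 1) (by simpa using hdL)
    simp only [pow_one] at this
    exact hcond this
  rw [natDegree_cyclotomic, ← even_iff_two_dvd]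
  exact Nat.totient_even (by omega)

include ha hb hc in
lemma Ep_eval_one : (Ep a b c).eval 1 = 1 := by
  rw [Ep, eval_prod]
  apply Finset.prod_eq_one
  intro d hd
  rw [Finset.mem_filter] at hd
  obtain ⟨hdF, hcond⟩ := hd
  have hdL : d ∣ Lv a b c := (Nat.mem_divisors.mp hdF).1
  apply eval_one_cyclotomic_not_prime_pow
  intro p hp k hpk
  apply hcond
  rw [← hpk] at hdL ⊢
  exact ppow_dvd_Lv ha hb hc hp hdL

/-! ### Laurent polynomial side -/

lemma Tsub (n : ℕ) :
    (T (n : ℤ) - T (-(n : ℤ)) : LaurentPolynomial ℤ) =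
      T (-(n : ℤ)) * aeval (T 2 : LaurentPolynomial ℤ) ((X : Polynomial ℤ) ^ n - 1) := by
  rw [map_sub, map_pow, aeval_X, map_one, T_pow, mul_sub, mul_one, ← T_add]
  rw [show (-(n : ℤ) + (n : ℤ) * 2) = (n : ℤ) by ring]

lemma Tne {n : ℕ} (hn : 0 < n) : (T (n : ℤ) - T (-(n : ℤ)) : LaurentPolynomial ℤ) ≠ 0 := by
  intro hz
  have h1 : (T (n : ℤ) - T (-(n : ℤ)) : LaurentPolynomial ℤ).coeff (n : ℤ) = 1 := by
    rw [AddMonoidAlgebra.coeff_sub, Finsupp.sub_apply]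
    rw [T_apply, T_apply]
    have : -(n : ℤ) ≠ (n : ℤ) := by omega
    simp [this]
  rw [hz] at h1
  simp at h1

/-- Chebyshev-type: `T n + T (-n)` is a polynomial in `T 1 + T (-1)`. -/
lemma cheb (n : ℕ) : ∃ P : Polynomial ℤ,
    aeval (T 1 + T (-1) : LaurentPolynomial ℤ) P = T (n : ℤ) + T (-(n : ℤ)) := by
  have TP : ∀ m : ℕ, (T (m : ℤ) : LaurentPolynomial ℤ) = T 1 ^ m := fun m => by
    rw [T_pow, mul_one]
  have TN : ∀ m : ℕ, (T (-(m : ℤ)) : LaurentPolynomial ℤ) = T (-1) ^ m := fun m => by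
    rw [T_pow, show ((m : ℤ)) * (-1) = -(m : ℤ) by ring]
  have hsr : (T 1 : LaurentPolynomial ℤ) * T (-1) = 1 := by
    rw [← T_add]; norm_num
  induction n using Nat.strong_induction_on with
  | _ n ih =>
    match n, ih with
    | 0, _ => exact ⟨Polynomial.C 2, by rw [aeval_C, map_ofNat]; norm_num⟩
    | 1, _ => exact ⟨X, by rw [aeval_X]; norm_num⟩
    | (k+2), ih =>
      obtain ⟨P1, h1⟩ := ih (k+1) (by omega)
      obtain ⟨P0, h0⟩ := ih k (by omega)
      refine ⟨X * P1 - P0, ?_⟩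
      rw [map_sub, map_mul, aeval_X, h1, h0, TP (k+1), TN (k+1), TP k, TN k, TP (k+2),
        TN (k+2)]
      linear_combination ((T 1 : LaurentPolynomial ℤ) ^ k + T (-1) ^ k) * hsr

/-- A Laurent polynomial fixed by `invert` is a polynomial in `T 1 + T (-1)`. -/
lemma symm_exists (f : LaurentPolynomial ℤ) (hf : invert f = f) :
    ∃ P : Polynomial ℤ, aeval (T 1 + T (-1) : LaurentPolynomial ℤ) P = f := by
  have hC : ∀ z : ℤ, (algebraMap ℤ (LaurentPolynomial ℤ)) z = LaurentPolynomial.C z := by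
    intro z
    exact DFunLike.congr_fun (Subsingleton.elim _ _) z
  suffices H : ∀ n : ℕ, ∀ f : LaurentPolynomial ℤ, f.coeff.support.sup Int.natAbs ≤ n →
      invert f = f → ∃ P : Polynomial ℤ, aeval (T 1 + T (-1) : LaurentPolynomial ℤ) P = f by
    exact H _ f le_rfl hf
  intro n
  induction n with
  | zero =>
    intro f hs _
    have hsub : f.coeff.support ⊆ {0} := by
      intro m hm
      have := Finset.le_sup (f := Int.natAbs) hm
      rw [Finset.mem_singleton]
      omega
    rw [Finsupp.support_subset_singleton] at hsub
    refine ⟨Polynomial.C (f.coeff 0), ?_⟩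
    rw [aeval_C, hC]
    conv_rhs => rw [← AddMonoidAlgebra.ofCoeff_coeff f, hsub, AddMonoidAlgebra.ofCoeff_single]
    rw [single_eq_C_mul_T, T_zero, mul_one]
  | succ n IH =>
    intro f hs hf
    by_cases hn : f.coeff.support.sup Int.natAbs ≤ n
    · exact IH f hn hf
    · set N : ℕ := n + 1 with hN
      set cc : ℤ := f.coeff ((N : ℤ)) with hcc
      have hNne : (-(N : ℤ)) ≠ (N : ℤ) := by omega
      have hsym : ∀ m : ℤ, f.coeff (-m) = f.coeff m := by
        intro m
        conv_rhs => rw [← hf]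
        rw [invert_apply]
      let s1 : LaurentPolynomial ℤ := AddMonoidAlgebra.single ((N : ℤ)) cc
      let s2 : LaurentPolynomial ℤ := AddMonoidAlgebra.single (-(N : ℤ)) cc
      have hs1 : s1 = LaurentPolynomial.C cc * T ((N : ℤ)) := single_eq_C_mul_T cc _
      have hs2 : s2 = LaurentPolynomial.C cc * T (-(N : ℤ)) := single_eq_C_mul_T cc _
      set g : LaurentPolynomial ℤ := f - s1 - s2 with hg
      have happ : ∀ m : ℤ, g.coeff m = f.coeff m - (if (N : ℤ) = m then cc else 0)
          - (if (-(N : ℤ)) = m then cc else 0) := by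
        intro m
        rw [hg, AddMonoidAlgebra.coeff_sub, AddMonoidAlgebra.coeff_sub, Finsupp.sub_apply, Finsupp.sub_apply]
        show f.coeff m - (AddMonoidAlgebra.single ((N : ℤ)) cc).coeff m - (AddMonoidAlgebra.single (-(N : ℤ)) cc).coeff m = _
        rw [AddMonoidAlgebra.coeff_single, AddMonoidAlgebra.coeff_single, Finsupp.single_apply, Finsupp.single_apply]
      have hgs : g.coeff.support.sup Int.natAbs ≤ n := by
        apply Finset.sup_le
        intro m hm
        have hgm : g.coeff m ≠ 0 := Finsupp.mem_support_iff.mp hm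
        by_contra hlt
        push_neg at hlt
        rcases eq_or_ne m ((N : ℤ)) with rfl | hm1
        · refine hgm ?_
          rw [happ, if_pos rfl, if_neg hNne, sub_zero, hcc, sub_self]
        · rcases eq_or_ne m (-(N : ℤ)) with rfl | hm2
          · refine hgm ?_
            rw [happ, if_neg (fun hh => hNne hh.symm), if_pos rfl, sub_zero, hsym, hcc,
              sub_self]
          · rw [happ, if_neg (by omega), if_neg (by omega), sub_zero, sub_zero] at hgm
            have hmem : m ∈ f.coeff.support := Finsupp.mem_support_iff.mpr hgm
            have hle := Finset.le_sup (f := Int.natAbs) hmem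
            have h2 : m.natAbs ≤ N := le_trans hle hs
            have h3 : m.natAbs = N := by omega
            rcases Int.natAbs_eq_iff.mp h3 with h' | h'
            · exact hm1 h'
            · exact hm2 h'
      have hgf : invert g = g := by
        rw [hg, hs1, hs2]
        rw [map_sub, map_sub, map_mul, map_mul, invert_C, invert_T, invert_T, hf, neg_neg]
        ring
      obtain ⟨Pg, hPg⟩ := IH g hgs hgf
      obtain ⟨Pc, hPc⟩ := cheb N
      refine ⟨Pg + Polynomial.C cc * Pc, ?_⟩
      rw [map_add, map_mul, aeval_C, hPg, hPc, hC, hg, hs1, hs2]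
      ring

end QnumAux

open QnumAux

open LaurentPolynomial in
/-- For positive integers a, b, c with gcd(a,b,c) = 1,
[lcm(a,b,c)]·[gcd(a,b)]·[gcd(b,c)]·[gcd(c,a)] / ([a][b][c][1]) is a polynomial
in t = q + q^{−1} − 2 with integer coefficients and constant term 1.
Here T is q^{1/2}, [n] = T n − T (−n), t = T 2 + T (−2) − 2. -/
theorem lcm_gcd_qnum_ratio (a b c : ℕ) (ha : 0 < a) (hb : 0 < b) (hc : 0 < c)
    (h : Nat.gcd a (Nat.gcd b c) = 1) :
    ∃ P : Polynomial ℤ,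
      Polynomial.aeval (T 2 + T (-2) - 2 : LaurentPolynomial ℤ) P *
          ((T (a : ℤ) - T (-(a : ℤ))) * (T (b : ℤ) - T (-(b : ℤ))) *
            (T (c : ℤ) - T (-(c : ℤ))) * (T 1 - T (-1)))
        = (T ((Nat.lcm a (Nat.lcm b c) : ℕ) : ℤ) - T (-((Nat.lcm a (Nat.lcm b c) : ℕ) : ℤ))) *
            (T ((Nat.gcd a b : ℕ) : ℤ) - T (-((Nat.gcd a b : ℕ) : ℤ))) *
            (T ((Nat.gcd b c : ℕ) : ℤ) - T (-((Nat.gcd b c : ℕ) : ℤ))) *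
            (T ((Nat.gcd c a : ℕ) : ℤ) - T (-((Nat.gcd c a : ℕ) : ℤ))) ∧
      P.coeff 0 = 1 := by
  classical
  have hL0 : Lv a b c ≠ 0 := Lv_ne ha hb hc
  set m : ℕ := (Ep a b c).natDegree with hm
  obtain ⟨k, hk⟩ := deg_even ha hb hc (a := a) (b := b) (c := c)
  rw [← hm] at hk
  have hstep := step1 ha hb hc h
  have hdeg := deg_eq ha hb hc h
  simp only [Lv] at hstep hdeg
  set tval : LaurentPolynomial ℤ := T 2 + T (-2) - 2 with htval
  set core : LaurentPolynomial ℤ := (T (a : ℤ) - T (-(a : ℤ))) * (T (b : ℤ) - T (-(b : ℤ))) *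
      (T (c : ℤ) - T (-(c : ℤ))) * (T 1 - T (-1)) with hcoredef
  set Rhs : LaurentPolynomial ℤ :=
      (T ((Nat.lcm a (Nat.lcm b c) : ℕ) : ℤ) - T (-((Nat.lcm a (Nat.lcm b c) : ℕ) : ℤ))) *
      (T ((Nat.gcd a b : ℕ) : ℤ) - T (-((Nat.gcd a b : ℕ) : ℤ))) *
      (T ((Nat.gcd b c : ℕ) : ℤ) - T (-((Nat.gcd b c : ℕ) : ℤ))) *
      (T ((Nat.gcd c a : ℕ) : ℤ) - T (-((Nat.gcd c a : ℕ) : ℤ))) with hrhsdef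
  set Qv : LaurentPolynomial ℤ :=
      T (-(m : ℤ)) * Polynomial.aeval (T 2 : LaurentPolynomial ℤ) (Ep a b c) with hQv
  -- core expansion
  have hT1 : (T 1 - T (-1) : LaurentPolynomial ℤ)
      = T (-(1 : ℤ)) * Polynomial.aeval (T 2 : LaurentPolynomial ℤ) ((X : Polynomial ℤ) ^ 1 - 1) := by
    exact_mod_cast Tsub 1
  have expL : core = T (-((a : ℤ) + b + c + 1)) *
      Polynomial.aeval (T 2 : LaurentPolynomial ℤ)
        (((X : Polynomial ℤ) ^ a - 1) * (X ^ b - 1) * (X ^ c - 1) * (X ^ 1 - 1)) := by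
    rw [hcoredef, Tsub a, Tsub b, Tsub c, hT1, map_mul, map_mul, map_mul,
      show (-((a : ℤ) + b + c + 1)) = -(a : ℤ) + -(b : ℤ) + -(c : ℤ) + -(1 : ℤ) by ring,
      T_add, T_add, T_add]
    ring
  have expR : Rhs = T (-((Nat.lcm a (Nat.lcm b c) : ℤ) + (Nat.gcd a b : ℤ) + (Nat.gcd b c : ℤ) +
        (Nat.gcd c a : ℤ))) *
      Polynomial.aeval (T 2 : LaurentPolynomial ℤ)
        (((X : Polynomial ℤ) ^ (Nat.lcm a (Nat.lcm b c)) - 1) * (X ^ (Nat.gcd a b) - 1) *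
          (X ^ (Nat.gcd b c) - 1) * (X ^ (Nat.gcd c a) - 1)) := by
    rw [hrhsdef, Tsub (Nat.lcm a (Nat.lcm b c)), Tsub (Nat.gcd a b), Tsub (Nat.gcd b c),
      Tsub (Nat.gcd c a), map_mul, map_mul, map_mul,
      show (-((Nat.lcm a (Nat.lcm b c) : ℤ) + (Nat.gcd a b : ℤ) + (Nat.gcd b c : ℤ) +
          (Nat.gcd c a : ℤ)))
        = -(Nat.lcm a (Nat.lcm b c) : ℤ) + -(Nat.gcd a b : ℤ) + -(Nat.gcd b c : ℤ) +
          -(Nat.gcd c a : ℤ) by ring,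
      T_add, T_add, T_add]
    ring
  have hexp : (-((a : ℤ) + b + c + 1)) + -(m : ℤ)
      = -((Nat.lcm a (Nat.lcm b c) : ℤ) + (Nat.gcd a b : ℤ) + (Nat.gcd b c : ℤ) +
        (Nat.gcd c a : ℤ)) := by
    omega
  have hkey : core * Qv = Rhs := by
    rw [expL, expR, hQv, mul_assoc, mul_comm
      (Polynomial.aeval (T 2 : LaurentPolynomial ℤ)
        (((X : Polynomial ℤ) ^ a - 1) * (X ^ b - 1) * (X ^ c - 1) * (X ^ 1 - 1))),
      ← mul_assoc, ← mul_assoc, ← T_add, hexp, mul_assoc, ← map_mul, mul_comm (Ep a b c), hstep]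
  have hcore : core ≠ 0 := by
    rw [hcoredef]
    refine mul_ne_zero (mul_ne_zero (mul_ne_zero (Tne ha) (Tne hb)) (Tne hc)) ?_
    have := Tne (n := 1) one_pos
    simpa using this
  have icore : invert core = core := by
    rw [hcoredef]
    simp only [map_mul, map_sub, invert_T, neg_neg]
    ring
  have iR : invert Rhs = Rhs := by
    rw [hrhsdef]
    simp only [map_mul, map_sub, invert_T, neg_neg]
    ring
  have iQ : invert Qv = Qv := by
    have h2 := congrArg invert hkey
    rw [map_mul, icore, iR, ← hkey] at h2
    exact mul_left_cancel₀ hcore h2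
  -- the doubling map
  set δ : LaurentPolynomial ℤ →ₐ[ℤ] LaurentPolynomial ℤ :=
    AddMonoidAlgebra.mapDomainAlgHom ℤ ℤ (AddMonoidHom.mulLeft (2 : ℤ)) with hδ
  have δT : ∀ n : ℤ, δ (T n) = T (2 * n) := by
    intro n
    show AddMonoidAlgebra.mapDomain (⇑(AddMonoidHom.mulLeft (2 : ℤ))) (AddMonoidAlgebra.single n 1) = T (2 * n)
    rw [AddMonoidAlgebra.mapDomain_single]
    rfl
  have δinj : Function.Injective δ := by
    have hcoe : ⇑δ = AddMonoidAlgebra.mapDomain (⇑(AddMonoidHom.mulLeft (2 : ℤ))) := rfl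
    rw [hcoe]
    exact AddMonoidAlgebra.mapDomain_injective (fun x y hxy => by
      have h2' : 2 * x = 2 * y := hxy
      omega)
  have hC : ∀ z : ℤ, (algebraMap ℤ (LaurentPolynomial ℤ)) z = LaurentPolynomial.C z := fun z =>
    DFunLike.congr_fun (Subsingleton.elim _ _) z
  have hcomm : ∀ p : LaurentPolynomial ℤ, invert (δ p) = δ (invert p) := by
    have hhom : ((invert (R := ℤ)).toAlgHom.toRingHom.comp δ.toRingHom :
          LaurentPolynomial ℤ →+* LaurentPolynomial ℤ)
        = δ.toRingHom.comp (invert (R := ℤ)).toAlgHom.toRingHom := by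
      apply AddMonoidAlgebra.ringHom_ext
      · intro b
        have hb' : (AddMonoidAlgebra.single (0 : ℤ) b : LaurentPolynomial ℤ)
            = algebraMap ℤ (LaurentPolynomial ℤ) b := by rw [hC]; rfl
        simp [hb', AlgHom.commutes, AlgEquiv.commutes]
      · intro n
        have hn' : (AddMonoidAlgebra.single (n : ℤ) (1 : ℤ) : LaurentPolynomial ℤ) = T n := rfl
        simp only [RingHom.coe_comp, Function.comp_apply, hn', AlgEquiv.toAlgHom_eq_coe,
          AlgHom.coe_coe, AlgHom.coe_ringHom_mk, AlgHom.toRingHom_eq_coe, RingHom.coe_coe]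
        rw [δT, AlgEquiv.coe_toAlgHom, invert_T, invert_T, δT, mul_neg]
    exact fun p => DFunLike.congr_fun hhom p
  set f0 : LaurentPolynomial ℤ :=
    T (-(k : ℤ)) * Polynomial.aeval (T 1 : LaurentPolynomial ℤ) (Ep a b c) with hf0
  have hδf0 : δ f0 = Qv := by
    rw [hf0, map_mul, ← Polynomial.aeval_algHom_apply, hQv]
    congr 1
    · rw [δT]
      congr 1
      omega
    · congr 1
      rw [δT]
      norm_num
  have if0 : invert f0 = f0 := by
    have hh : invert (δ f0) = δ f0 := by rw [hδf0]; exact iQ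
    rw [hcomm] at hh
    exact δinj hh
  obtain ⟨P0, hP0⟩ := symm_exists f0 if0
  have hQP : Polynomial.aeval (T 2 + T (-2) : LaurentPolynomial ℤ) P0 = Qv := by
    have hδx : δ (T 1 + T (-1) : LaurentPolynomial ℤ) = T 2 + T (-2) := by
      rw [map_add, δT, δT]
      norm_num
    rw [← hδx, Polynomial.aeval_algHom_apply, hP0, hδf0]
  have h2C : (LaurentPolynomial.C (2 : ℤ) : LaurentPolynomial ℤ) = 2 := by
    rw [← hC]
    exact map_ofNat _ 2
  have hPQ : Polynomial.aeval tval (P0.comp (X + Polynomial.C 2)) = Qv := by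
    rw [Polynomial.aeval_comp, map_add, Polynomial.aeval_X, Polynomial.aeval_C, hC, h2C]
    have ht2 : tval + 2 = T 2 + T (-2) := by
      rw [htval]; ring
    rw [ht2, hQP]
  refine ⟨P0.comp (X + Polynomial.C 2), ?_, ?_⟩
  · rw [hPQ, mul_comm]
    exact hkey
  · -- constant coefficient
    set ε : LaurentPolynomial ℤ →+* ℤ :=
      AddMonoidAlgebra.liftNCRingHom (RingHom.id ℤ) 1 (fun _ _ => Commute.one_right _) with hε
    have εT : ∀ n : ℤ, ε (T n) = 1 := by
      intro n
      have h5 : ε (T n)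
          = (RingHom.id ℤ) 1 * (1 : Multiplicative ℤ →* ℤ) (Multiplicative.ofAdd n) :=
        AddMonoidAlgebra.liftNC_single _ _ n 1
      simpa using h5
    have hcompε : (ε.comp (algebraMap ℤ (LaurentPolynomial ℤ)) : ℤ →+* ℤ) = RingHom.id ℤ :=
      Subsingleton.elim _ _
    have hεaeval : ∀ (x : LaurentPolynomial ℤ) (p : Polynomial ℤ),
        ε (Polynomial.aeval x p) = p.eval (ε x) := by
      intro x p
      rw [Polynomial.aeval_def, Polynomial.hom_eval₂, hcompε]
      rfl
    have hεt : ε tval = 0 := by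
      rw [htval, map_sub, map_add, εT, εT, map_ofNat]
      norm_num
    have hεQ : ε Qv = 1 := by
      rw [hQv, map_mul, εT, one_mul, hεaeval, εT, Ep_eval_one ha hb hc]
    rw [Polynomial.coeff_zero_eq_eval_zero]
    have h6 := hεaeval tval (P0.comp (X + Polynomial.C 2))
    rw [hεt, hPQ, hεQ] at h6
    exact h6.symm
end

section
/- Let λ be a partition and k a positive integer with k odd or |λ| even. Then [kλ]/[λ] = k^{l(λ)} + t·u(t) for some u ∈ ℤ[t] of degree (k−1)|λ|/2 − 1, where t = [1]^2. -/
open Polynomial LaurentPolynomial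

namespace LemmaG32

lemma T_one_mul : (T 1 : LaurentPolynomial ℤ) * T (-1) = 1 := by
  rw [← T_add]; norm_num

lemma dphi (m : ℕ) :
    Polynomial.aeval (T 1 + T (-1) : LaurentPolynomial ℤ) (Polynomial.dickson 1 (1:ℤ) m)
      = T (m : ℤ) + T (-(m : ℤ)) := by
  have h := Polynomial.dickson_one_one_eval_add_inv (T 1 : LaurentPolynomial ℤ) (T (-1))
    T_one_mul m
  rw [Polynomial.aeval_def, Polynomial.eval₂_eq_eval_map, Polynomial.map_dickson, map_one]
  rw [h, T_pow, T_pow]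
  norm_num

lemma deval2 (m : ℕ) : (Polynomial.dickson 1 (1 : ℤ) m).eval 2 = 2 := by
  have h := Polynomial.dickson_one_one_eval_add_inv (1 : ℤ) 1 (one_mul 1) m
  norm_num at h
  exact h

lemma ddeg : ∀ m : ℕ, (Polynomial.dickson 1 (1 : ℤ) (m + 1)).Monic ∧
    (Polynomial.dickson 1 (1 : ℤ) (m + 1)).natDegree = m + 1
  | 0 => by simp [Polynomial.dickson_one, Polynomial.monic_X]
  | 1 => by
    have h2 : Polynomial.dickson 1 (1 : ℤ) 2 = X ^ 2 - Polynomial.C 2 := by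
      rw [Polynomial.dickson_two]; norm_num
    rw [h2]
    exact ⟨Polynomial.monic_X_pow_sub_C 2 (by norm_num), by
      rw [Polynomial.natDegree_sub_C, Polynomial.natDegree_X_pow]⟩
  | (m + 2) => by
    obtain ⟨h1m, h1d⟩ := ddeg m
    obtain ⟨h2m, h2d⟩ := ddeg (m + 1)
    have hrec := Polynomial.dickson_add_two 1 (1 : ℤ) (m + 1)
    rw [show m + 2 + 1 = m + 1 + 2 from rfl, hrec, Polynomial.C_1, one_mul]
    have hx : (X * Polynomial.dickson 1 (1 : ℤ) (m + 1 + 1)).Monic :=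
      Polynomial.monic_X.mul h2m
    have hxd : (X * Polynomial.dickson 1 (1 : ℤ) (m + 1 + 1)).natDegree = m + 3 := by
      rw [Polynomial.monic_X.natDegree_mul h2m, Polynomial.natDegree_X, h2d]
      omega
    constructor
    · apply hx.sub_of_left
      rw [Polynomial.degree_eq_natDegree h1m.ne_zero, Polynomial.degree_eq_natDegree hx.ne_zero,
        hxd, h1d]
      exact_mod_cast by omega
    · rw [Polynomial.natDegree_sub_eq_left_of_natDegree_lt (by rw [hxd, h1d]; omega), hxd]

lemma dparity : ∀ m i, (Polynomial.dickson 1 (1 : ℤ) m).coeff i ≠ 0 → i % 2 = m % 2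
  | 0, i => by
    have h0 : Polynomial.dickson 1 (1 : ℤ) 0 = Polynomial.C 2 := by
      rw [Polynomial.dickson_zero]; norm_num
    rw [h0]
    intro h
    rw [Polynomial.coeff_C] at h
    by_cases hi : i = 0 <;> simp [hi] at h ⊢
  | 1, i => by
    rw [Polynomial.dickson_one]
    intro h
    rw [Polynomial.coeff_X] at h
    by_cases hi : 1 = i
    · omega
    · simp [hi] at h
  | (m + 2), i => by
    rw [Polynomial.dickson_add_two, Polynomial.C_1, one_mul]
    intro h
    rw [Polynomial.coeff_sub] at h
    rcases i with _ | j
    · simp [Polynomial.mul_coeff_zero] at h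
      have := dparity m 0 h
      omega
    · rw [Polynomial.coeff_X_mul] at h
      have : (Polynomial.dickson 1 (1 : ℤ) (m + 1)).coeff j ≠ 0 ∨
          (Polynomial.dickson 1 (1 : ℤ) m).coeff (j + 1) ≠ 0 := by
        by_contra hc
        push_neg at hc
        rw [hc.1, hc.2] at h
        simp at h
      rcases this with hc | hc
      · have := dparity (m + 1) j hc; omega
      · have := dparity m (j + 1) hc; omega

lemma key (a b : ℤ) : (T a - T (-a) : LaurentPolynomial ℤ) * (T b + T (-b)) =
    (T (a + b) - T (-(a + b))) + (T (a - b) - T (-(a - b))) := by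
  rw [show (-(a+b)) = -a + -b by ring, show (-(a-b)) = b - a by ring,
    T_add a b, T_add (-a) (-b), T_sub a b, T_sub b a]
  ring

noncomputable def cc : ℕ → ℕ → Polynomial ℤ
  | 0, _ => 0
  | 1, _ => 1
  | (k + 2), n => cc k n + Polynomial.dickson 1 1 (n * (k + 1))

lemma cc_id : ∀ (k n : ℕ),
    (T ((k * n : ℕ) : ℤ) - T (-((k * n : ℕ) : ℤ)) : LaurentPolynomial ℤ)
      = (T (n : ℤ) - T (-(n : ℤ))) *
          Polynomial.aeval (T 1 + T (-1) : LaurentPolynomial ℤ) (cc k n)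
  | 0, n => by simp [cc]
  | 1, n => by simp [cc]
  | (k + 2), n => by
    rw [show cc (k + 2) n = cc k n + Polynomial.dickson 1 1 (n * (k + 1)) from rfl,
      map_add, dphi (n * (k + 1)), mul_add, ← cc_id k n,
      key (n : ℤ) ((n * (k + 1) : ℕ) : ℤ)]
    have e1 : (n : ℤ) + ((n * (k + 1) : ℕ) : ℤ) = (((k + 2) * n : ℕ) : ℤ) := by
      push_cast; ring
    have e2 : (n : ℤ) - ((n * (k + 1) : ℕ) : ℤ) = -(((k * n : ℕ) : ℤ)) := by
      push_cast; ring
    rw [e1, e2, neg_neg]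
    ring

lemma cc_eval2 : ∀ (k n : ℕ), (cc k n).eval 2 = (k : ℤ)
  | 0, n => by simp [cc]
  | 1, n => by simp [cc]
  | (k + 2), n => by
    rw [show cc (k + 2) n = cc k n + Polynomial.dickson 1 1 (n * (k + 1)) from rfl,
      Polynomial.eval_add, cc_eval2 k n, deval2]
    push_cast; ring

lemma cc_monic : ∀ (k n : ℕ), 0 < n → (cc (k + 1) n).Monic ∧ (cc (k + 1) n).natDegree = n * k
  | 0, n, _ => by
    refine ⟨?_, ?_⟩ <;> simp [cc, Polynomial.monic_one]
  | 1, n, hn => by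
    have hn' : n - 1 + 1 = n := by omega
    obtain ⟨hm, hd⟩ := ddeg (n - 1)
    rw [hn'] at hm hd
    rw [show cc 2 n = cc 0 n + Polynomial.dickson 1 1 (n * 1) from rfl]
    simp only [cc, zero_add, mul_one]
    exact ⟨hm, by rw [hd]⟩
  | (k + 2), n, hn => by
    obtain ⟨hm, hd⟩ := cc_monic k n hn
    have hd' : n * (k + 2) - 1 + 1 = n * (k + 2) := by
      have : 0 < n * (k + 2) := by positivity
      omega
    obtain ⟨hm2, hd2⟩ := ddeg (n * (k + 2) - 1)
    rw [hd'] at hm2 hd2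
    rw [show cc (k + 3) n = cc (k + 1) n + Polynomial.dickson 1 1 (n * (k + 2)) from rfl]
    have hlt : (cc (k + 1) n).natDegree < (Polynomial.dickson 1 (1 : ℤ) (n * (k + 2))).natDegree := by
      rw [hd, hd2]; nlinarith
    constructor
    · apply hm2.add_of_right
      rw [Polynomial.degree_eq_natDegree hm.ne_zero, Polynomial.degree_eq_natDegree hm2.ne_zero]
      exact_mod_cast hlt
    · rw [Polynomial.natDegree_add_eq_right_of_natDegree_lt hlt, hd2]

lemma cc_parity : ∀ (k n : ℕ), ∀ i, (cc (k + 1) n).coeff i ≠ 0 → i % 2 = (n * k) % 2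
  | 0, n, i => by
    intro h
    rw [show cc 1 n = 1 from rfl, Polynomial.coeff_one] at h
    by_cases hi : i = 0
    · simp [hi]
    · simp [hi] at h
  | 1, n, i => by
    rw [show cc 2 n = cc 0 n + Polynomial.dickson 1 1 (n * 1) from rfl]
    simp only [cc, zero_add]
    intro h
    exact dparity (n * 1) i h
  | (k + 2), n, i => by
    rw [show cc (k + 3) n = cc (k + 1) n + Polynomial.dickson 1 1 (n * (k + 2)) from rfl]
    intro h
    rw [Polynomial.coeff_add] at h
    have : (cc (k + 1) n).coeff i ≠ 0 ∨
        (Polynomial.dickson 1 (1 : ℤ) (n * (k + 2))).coeff i ≠ 0 := by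
      by_contra hc
      push_neg at hc
      rw [hc.1, hc.2] at h
      simp at h
    have he : n * (k + 2) = n * k + 2 * n := by ring
    rcases this with hc | hc
    · have := cc_parity k n i hc; omega
    · have := dparity (n * (k + 2)) i hc; omega

lemma list_eq (f : ℤ → LaurentPolynomial ℤ) (L : List ℕ) :
    List.map (fun n : ℕ => f (n : ℤ)) L = List.map f (L.flatMap fun a => [(a : ℤ)]) := by
  induction L with
  | nil => rfl
  | cons a l ih => simp only [List.map_cons, List.flatMap_cons, List.singleton_append, ih]; rfl

lemma parity_mul {p q : Polynomial ℤ} {a b : ℕ}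
    (hp : ∀ i, p.coeff i ≠ 0 → i % 2 = a % 2) (hq : ∀ i, q.coeff i ≠ 0 → i % 2 = b % 2) :
    ∀ i, (p * q).coeff i ≠ 0 → i % 2 = (a + b) % 2 := by
  intro i h
  rw [Polynomial.coeff_mul] at h
  obtain ⟨⟨x, y⟩, hmem, hne⟩ := Finset.exists_ne_zero_of_sum_ne_zero h
  rw [Finset.HasAntidiagonal.mem_antidiagonal] at hmem
  have hx := hp x (left_ne_zero_of_mul hne)
  have hy := hq y (right_ne_zero_of_mul hne)
  omega

lemma Wprops (k : ℕ) (hk : 0 < k) : ∀ (M : List ℕ), (∀ x ∈ M, 0 < x) →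
    ((M.map (cc k)).prod).Monic ∧ ((M.map (cc k)).prod).natDegree = (k - 1) * M.sum ∧
      ((M.map (cc k)).prod).eval 2 = (k : ℤ) ^ M.length ∧
      (∀ i, ((M.map (cc k)).prod).coeff i ≠ 0 → i % 2 = ((k - 1) * M.sum) % 2) := by
  intro M
  induction M with
  | nil =>
    intro _
    refine ⟨Polynomial.monic_one, by simp, by simp, ?_⟩
    intro i h
    simp only [List.map_nil, List.prod_nil, Polynomial.coeff_one] at h
    by_cases hi : i = 0
    · simp [hi]
    · simp [hi] at h
  | cons a M ih =>
    intro h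
    obtain ⟨hm, hd, he, hpar⟩ := ih (fun x hx => h x (List.mem_cons_of_mem a hx))
    have hk' : k - 1 + 1 = k := by omega
    obtain ⟨ham, had⟩ := cc_monic (k - 1) a (h a List.mem_cons_self)
    rw [hk'] at ham had
    have hapar := cc_parity (k - 1) a
    rw [hk'] at hapar
    simp only [List.map_cons, List.prod_cons, List.sum_cons, List.length_cons]
    refine ⟨ham.mul hm, ?_, ?_, ?_⟩
    · rw [ham.natDegree_mul hm, had, hd]; ring
    · rw [Polynomial.eval_mul, cc_eval2, he]; ring
    · have := parity_mul (a := a * (k - 1)) (b := (k - 1) * M.sum) hapar hpar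
      intro i hi
      have := this i hi
      have he2 : (k - 1) * (a + M.sum) = a * (k - 1) + (k - 1) * M.sum := by ring
      omega

end LemmaG32


open LaurentPolynomial in
/-- For a partition λ (list of positive parts) and k ≥ 1 with k odd or |λ| even,
[kλ]/[λ] = k^{l(λ)} + t·u(t) for some u ∈ ℤ[t] of degree (k−1)|λ|/2 − 1
(natural subtraction; t = q + q^{−1} − 2, T = q^{1/2}, [n] = T n − T(−n)). -/
theorem lemma_G3_2 (L : List ℕ) (k : ℕ) (hk : 0 < k) (hL : ∀ x ∈ L, 0 < x)
    (hpar : Odd k ∨ Even L.sum) :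
    ∃ u : Polynomial ℤ,
      (L.map (fun n => (T ((k * n : ℕ) : ℤ) - T (-((k * n : ℕ) : ℤ)) :
            LaurentPolynomial ℤ))).prod
        = (L.map (fun n => (T (n : ℤ) - T (-(n : ℤ)) : LaurentPolynomial ℤ))).prod *
            ((k : LaurentPolynomial ℤ) ^ L.length
              + (T 2 + T (-2) - 2) *
                  Polynomial.aeval (T 2 + T (-2) - 2 : LaurentPolynomial ℤ) u) ∧
      u.natDegree = (k - 1) * L.sum / 2 - 1 := by
  classical
  set y : LaurentPolynomial ℤ := T 1 + T (-1) with hy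
  set t : LaurentPolynomial ℤ := T 2 + T (-2) - 2 with ht
  set W : Polynomial ℤ := (L.map (LemmaG32.cc k)).prod with hWdef
  obtain ⟨hWm, hWd, hWe, hWp⟩ := LemmaG32.Wprops k hk L hL
  rw [← hWdef] at hWd hWe hWp
  have hprod : (L.map (fun n => (T ((k * n : ℕ) : ℤ) - T (-((k * n : ℕ) : ℤ)) :
        LaurentPolynomial ℤ))).prod
      = (L.map (fun n => (T (n : ℤ) - T (-(n : ℤ)) : LaurentPolynomial ℤ))).prod *
        Polynomial.aeval y W := by
    have h1 : L.map (fun n => (T ((k * n : ℕ) : ℤ) - T (-((k * n : ℕ) : ℤ)) :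
          LaurentPolynomial ℤ))
        = L.map (fun (n : ℕ) => (T (n : ℤ) - T (-(n : ℤ))) *
            Polynomial.aeval y (LemmaG32.cc k n)) :=
      List.map_congr_left fun n _ => LemmaG32.cc_id k n
    have h2 : Polynomial.aeval y W = (L.map (fun (n : ℕ) =>
        Polynomial.aeval y (LemmaG32.cc k n))).prod := by
      rw [hWdef, map_list_prod (Polynomial.aeval y), List.map_map]
      rfl
    rw [h1, List.prod_map_mul, h2]
    congr 1
    exact congrArg List.prod ((LemmaG32.list_eq (fun n => T n - T (-n)) L).trans (by simp))
  have heven : ((k - 1) * L.sum) % 2 = 0 := by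
    rcases hpar with h | h
    · obtain ⟨m, hm⟩ := h
      have h1 : k - 1 = 2 * m := by omega
      have h2 : 2 * m * L.sum = 2 * (m * L.sum) := by ring
      rw [h1, h2]
      omega
    · obtain ⟨m, hm⟩ := h
      have h1 : L.sum = 2 * m := by omega
      have h2 : (k - 1) * (2 * m) = 2 * ((k - 1) * m) := by ring
      rw [h1, h2]
      omega
  set V : Polynomial ℤ := ∑ i ∈ W.support, Polynomial.C (W.coeff i) * Polynomial.X ^ (i / 2)
    with hVdef
  have hWV : V.comp (Polynomial.X ^ 2) = W := by
    rw [Polynomial.comp_eq_aeval, hVdef, map_sum]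
    have h3 : ∀ i ∈ W.support,
        Polynomial.aeval (Polynomial.X ^ 2 : Polynomial ℤ)
            (Polynomial.C (W.coeff i) * Polynomial.X ^ (i / 2))
          = Polynomial.C (W.coeff i) * Polynomial.X ^ i := by
      intro i hi
      have hie : i % 2 = 0 := by
        have := hWp i (Polynomial.mem_support_iff.mp hi)
        omega
      rw [map_mul, Polynomial.aeval_C, map_pow, Polynomial.aeval_X, ← pow_mul,
        show 2 * (i / 2) = i by omega, Polynomial.algebraMap_eq]
    rw [Finset.sum_congr rfl h3]
    conv_rhs => rw [Polynomial.as_sum_support W]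
    exact Finset.sum_congr rfl fun i _ => Polynomial.C_mul_X_pow_eq_monomial
  have hVd2 : W.natDegree = V.natDegree * 2 := by
    rw [← hWV, Polynomial.natDegree_comp, Polynomial.natDegree_X_pow]
  have hVe : V.eval 4 = (k : ℤ) ^ L.length := by
    have h4 := hWe
    rw [← hWV, Polynomial.eval_comp] at h4
    simpa using h4
  have hP0 : (V.comp (Polynomial.X + Polynomial.C 4)).eval 0 = (k : ℤ) ^ L.length := by
    rw [Polynomial.eval_comp]
    simpa using hVe
  have hdvd : Polynomial.X ∣ V.comp (Polynomial.X + Polynomial.C 4)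
      - Polynomial.C ((k : ℤ) ^ L.length) := by
    rw [Polynomial.X_dvd_iff, Polynomial.coeff_sub, Polynomial.coeff_zero_eq_eval_zero, hP0,
      Polynomial.coeff_C]
    simp
  obtain ⟨u, hu⟩ := hdvd
  have hPd : (V.comp (Polynomial.X + Polynomial.C 4)).natDegree = V.natDegree := by
    rw [Polynomial.natDegree_comp, Polynomial.natDegree_X_add_C, mul_one]
  have hVdval : V.natDegree = (k - 1) * L.sum / 2 := by omega
  refine ⟨u, ?_, ?_⟩
  · rw [hprod]
    congr 1
    have hy2 : y ^ 2 = t + 4 := by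
      have e1 : (T 2 : LaurentPolynomial ℤ) = T 1 * T 1 := by rw [← T_add]; norm_num
      have e2 : (T (-2) : LaurentPolynomial ℤ) = T (-1) * T (-1) := by rw [← T_add]; norm_num
      rw [hy, ht, e1, e2]
      linear_combination (2 : LaurentPolynomial ℤ) * LemmaG32.T_one_mul
    calc Polynomial.aeval y W = Polynomial.aeval (t + 4) V := by
          rw [← hWV, Polynomial.aeval_comp, map_pow, Polynomial.aeval_X, hy2]
      _ = Polynomial.aeval t (V.comp (Polynomial.X + Polynomial.C 4)) := by
          rw [Polynomial.aeval_comp, map_add, Polynomial.aeval_X, Polynomial.aeval_C]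
          norm_num
      _ = (k : LaurentPolynomial ℤ) ^ L.length + t * Polynomial.aeval t u := by
          have h5 : V.comp (Polynomial.X + Polynomial.C 4)
              = Polynomial.C ((k : ℤ) ^ L.length) + Polynomial.X * u := by
            rw [← hu]; ring
          rw [h5, map_add, map_mul, Polynomial.aeval_X, Polynomial.aeval_C]
          norm_num
  · by_cases hu0 : u = 0
    · rw [hu0, mul_zero] at hu
      have h6 := sub_eq_zero.mp hu
      have h7 : (V.comp (Polynomial.X + Polynomial.C 4)).natDegree = 0 := by
        rw [h6, Polynomial.natDegree_C]
      rw [hu0, Polynomial.natDegree_zero]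
      omega
    · have h1 : (Polynomial.X * u).natDegree = 1 + u.natDegree := by
        rw [Polynomial.natDegree_mul Polynomial.X_ne_zero hu0, Polynomial.natDegree_X]
      have h2 : (V.comp (Polynomial.X + Polynomial.C 4)
          - Polynomial.C ((k : ℤ) ^ L.length)).natDegree = V.natDegree := by
        rw [Polynomial.natDegree_sub_C, hPd]
      rw [hu, h1] at h2
      omega
end

section
/- Let m_1, …, m_l be positive odd integers. Then the rational function ((−1)^{l+1} + Π_{i=1}^{l} (1 + t_{m_i}/2)) / (t + 4) lies in ℚ[t], where t_m = q^m + q^{−m} − 2 as a polynomial in t = q + q^{−1} − 2. -/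
open LaurentPolynomial in
lemma aeval_two_laurent (x : LaurentPolynomial ℚ) :
    Polynomial.aeval x (2 : Polynomial ℚ) = 2 := by
  rw [show (2:Polynomial ℚ) = ((2:ℕ):Polynomial ℚ) by norm_num, Polynomial.aeval_natCast]
  norm_num

open LaurentPolynomial in
/-- For each natural m there is Q ∈ ℚ[X] with aeval t Q = T(2m)+T(−2m)
and Q(−4) = 2·(−1)^m. -/
lemma exists_poly_T (m : ℕ) :
    ∃ Q : Polynomial ℚ,
      Polynomial.aeval (T 2 + T (-2) - 2 : LaurentPolynomial ℚ) Q
          = T (2 * (m : ℤ)) + T (-(2 * (m : ℤ)))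
        ∧ Q.eval (-4) = 2 * (-1) ^ m := by
  induction m using Nat.twoStepInduction with
  | zero =>
      exact ⟨2, by rw [aeval_two_laurent]; simp; norm_num, by norm_num⟩
  | one =>
      refine ⟨Polynomial.X + 2, by
        push_cast
        rw [map_add, Polynomial.aeval_X, aeval_two_laurent]
        ring, by norm_num⟩
  | more n ih1 ih2 =>
      obtain ⟨Q0, hQ0, hQ0e⟩ := ih1
      obtain ⟨Q1, hQ1, hQ1e⟩ := ih2
      refine ⟨(Polynomial.X + 2) * Q1 - Q0, ?_, ?_⟩
      · have key : (T 2 + T (-2) : LaurentPolynomial ℚ) *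
            (T (2 * ((n : ℤ) + 1)) + T (-(2 * ((n : ℤ) + 1))))
            = T (2 * ((n : ℤ) + 2)) + T (-(2 * ((n : ℤ) + 2)))
              + (T (2 * (n : ℤ)) + T (-(2 * (n : ℤ)))) := by
          simp only [add_mul, mul_add, ← T_add]
          rw [show (2:ℤ) + (2*(n:ℤ) + 2*1) = 2*(n:ℤ) + 2*2 by ring,
            show (2:ℤ) + -(2*(n:ℤ) + 2*1) = -(2*(n:ℤ)) by ring,
            show (-2:ℤ) + (2*(n:ℤ) + 2*1) = 2*(n:ℤ) by ring,
            show (-2:ℤ) + -(2*(n:ℤ) + 2*1) = -(2*(n:ℤ) + 2*2) by ring]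
          ring
        push_cast
        simp only [map_sub, map_mul, map_add, Polynomial.aeval_X, map_ofNat]
        push_cast at hQ1 hQ0
        rw [hQ1, hQ0]
        have : ((T 2 + T (-2) - 2 : LaurentPolynomial ℚ) + 2) = T 2 + T (-2) := by ring
        rw [this]
        linear_combination key
      · simp only [Polynomial.eval_sub, Polynomial.eval_mul, Polynomial.eval_add,
          Polynomial.eval_X, Polynomial.eval_ofNat, hQ1e, hQ0e]
        ring

open LaurentPolynomial in
/-- For positive odd integers m_1,…,m_l, the quantity
((−1)^{l+1} + Π_i (1 + t_{m_i}/2)) / (t + 4) lies in ℚ[t], where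
t_m = q^m + q^{−m} − 2 and t = q + q^{−1} − 2.  Here T is q^{1/2},
so t_m = T(2m) + T(−2m) − 2 and t = T 2 + T(−2) − 2. -/
theorem divisibility_by_t_add_four (l : ℕ) (m : Fin l → ℕ)
    (hodd : ∀ i, Odd (m i)) (hpos : ∀ i, 0 < m i) :
    ∃ P : Polynomial ℚ,
      ((-1 : LaurentPolynomial ℚ) ^ (l + 1)
          + ∏ i, (1 + C (1 / 2 : ℚ) * (T (2 * (m i : ℤ)) + T (-(2 * (m i : ℤ))) - 2)))
        = ((T 2 + T (-2) - 2) + 4) *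
            Polynomial.aeval (T 2 + T (-2) - 2 : LaurentPolynomial ℚ) P := by
  set t : LaurentPolynomial ℚ := T 2 + T (-2) - 2 with ht
  choose Q hQ hQe using fun i => exists_poly_T (m i)
  set R : Polynomial ℚ :=
    (-1) ^ (l + 1) + ∏ i, (1 + Polynomial.C (1/2 : ℚ) * (Q i - 2)) with hR
  have hRaeval : Polynomial.aeval t R
      = (-1 : LaurentPolynomial ℚ) ^ (l + 1)
        + ∏ i, (1 + C (1 / 2 : ℚ) * (T (2 * (m i : ℤ)) + T (-(2 * (m i : ℤ))) - 2)) := by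
    rw [hR, map_add, map_pow, map_neg, map_one, map_prod]
    congr 1
    refine Finset.prod_congr rfl fun i _ => ?_
    rw [map_add, map_one, map_mul, map_sub, Polynomial.aeval_C, hQ i,
      aeval_two_laurent, show algebraMap ℚ (LaurentPolynomial ℚ) (1/2) = C (1/2) from rfl]
  have hRroot : R.eval (-4) = 0 := by
    rw [hR]
    simp only [Polynomial.eval_add, Polynomial.eval_pow, Polynomial.eval_neg,
      Polynomial.eval_one, Polynomial.eval_prod, Polynomial.eval_mul,
      Polynomial.eval_sub, Polynomial.eval_C, Polynomial.eval_ofNat, hQe]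
    have : ∀ i : Fin l, (1 : ℚ) + 1/2 * (2 * (-1) ^ (m i) - 2) = -1 := by
      intro i
      obtain ⟨k, hk⟩ := hodd i
      rw [hk, pow_succ, pow_mul]
      norm_num
    rw [Finset.prod_congr rfl fun i _ => this i, Finset.prod_const]
    simp [pow_succ]
  have hdvd : (Polynomial.X + 4 : Polynomial ℚ) ∣ R := by
    have := (Polynomial.dvd_iff_isRoot (p := R) (a := -4)).mpr hRroot
    have h4 : (Polynomial.C (4:ℚ)) = 4 := map_ofNat _ 4
    simpa [sub_neg_eq_add, h4] using this
  obtain ⟨P, hP⟩ := hdvd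
  refine ⟨P, ?_⟩
  rw [← hRaeval, hP, map_mul, map_add, Polynomial.aeval_X,
    show (4:Polynomial ℚ) = ((4:ℕ):Polynomial ℚ) by norm_num, Polynomial.aeval_natCast]
  norm_num
end
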